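/- arXiv:1306.1033 — 8 statements merged into one kernel-verified Lean document; each statement's English description precedes it below -/
import Mathlib

section
/- Fix an integer p ≥ 2. For a partition λ and an integer l ≥ 0, define the l-th ramp as the set of nodes (r,c) ∈ ℕ² with c−1+(p−1)(r−1) = l. Let rmp_l(λ) be the number of nodes of λ in ramp l, rmp⁺_l(λ) the number of addable nodes of λ in ramp l, and rmp⁻_l(λ) the number of removable nodes of λ in ramp l (all zero for l < 0). Then for all l: rmp⁺_l(λ) − rmp⁻_{l−p}(λ) = δ_{l,0} − rmp_l(λ) + rmp_{l−1}(λ) + rmp_{l−p+1}(λ) − rmp_{l−p}(λ). -/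
/-- `f` represents a partition: weakly decreasing with finitely many nonzero parts.
`f r` is the `(r+1)`-th part (0-indexed). -/
def IsPartition (f : ℕ → ℕ) : Prop :=
  (∀ m n : ℕ, m ≤ n → f n ≤ f m) ∧ ∃ N, ∀ n, N ≤ n → f n = 0

/-- `(r, c)` (0-indexed) is a node of the Young diagram of `f`. -/
def Cell (f : ℕ → ℕ) (r c : ℕ) : Prop := c < f r

/-- The ramp containing the 0-indexed node `(r, c)`; this equals `c-1+(p-1)(r-1)` in
the paper's 1-indexed convention. -/
def rampOf (p : ℕ) (r c : ℕ) : ℤ := (c : ℤ) + ((p : ℤ) - 1) * (r : ℤ)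

/-- `(r, c)` is a removable node of `f`. -/
def Removable (f : ℕ → ℕ) (r c : ℕ) : Prop := c + 1 = f r ∧ f (r + 1) < f r

/-- `(r, c)` is an addable node of `f`. -/
def Addable (f : ℕ → ℕ) (r c : ℕ) : Prop := c = f r ∧ (r = 0 ∨ f r < f (r - 1))

/-- `rmp_l(λ)`: the number of nodes of `λ` in ramp `l`. -/
noncomputable def rmp (p : ℕ) (f : ℕ → ℕ) (l : ℤ) : ℕ :=
  Set.ncard {q : ℕ × ℕ | Cell f q.1 q.2 ∧ rampOf p q.1 q.2 = l}

/-- `rmp⁺_l(λ)`: the number of addable nodes of `λ` in ramp `l`. -/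
noncomputable def rmpAdd (p : ℕ) (f : ℕ → ℕ) (l : ℤ) : ℕ :=
  Set.ncard {q : ℕ × ℕ | Addable f q.1 q.2 ∧ rampOf p q.1 q.2 = l}

/-- `rmp⁻_l(λ)`: the number of removable nodes of `λ` in ramp `l`. -/
noncomputable def rmpRem (p : ℕ) (f : ℕ → ℕ) (l : ℤ) : ℕ :=
  Set.ncard {q : ℕ × ℕ | Removable f q.1 q.2 ∧ rampOf p q.1 q.2 = l}

/-- Counting nodes in a ramp row by row: within each row there is at most one node on a
given ramp, namely the one in column `(l - (p-1)r).toNat`. -/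
lemma key_count (p N : ℕ) (l : ℤ) (P : ℕ → ℕ → Prop) [∀ r c, Decidable (P r c)]
    (hb : ∀ r c, P r c → (c : ℤ) + ((p : ℤ) - 1) * (r:ℤ) = l → r < N) :
    Set.ncard {q : ℕ × ℕ | P q.1 q.2 ∧ rampOf p q.1 q.2 = l}
      = ∑ r ∈ Finset.range N,
          if 0 ≤ l - ((p : ℤ) - 1) * (r:ℤ) ∧ P r (l - ((p : ℤ) - 1) * (r:ℤ)).toNat then 1 else 0 := by
  have hset : {q : ℕ × ℕ | P q.1 q.2 ∧ rampOf p q.1 q.2 = l}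
      = (fun r : ℕ => (r, (l - ((p : ℤ) - 1) * (r:ℤ)).toNat)) ''
        ↑((Finset.range N).filter fun r : ℕ =>
            0 ≤ l - ((p : ℤ) - 1) * (r:ℤ) ∧ P r (l - ((p : ℤ) - 1) * (r:ℤ)).toNat) := by
    ext ⟨r, c⟩
    simp only [Set.mem_setOf_eq, Set.mem_image, Finset.mem_coe, Finset.mem_filter,
      Finset.mem_range, rampOf]
    constructor
    · rintro ⟨hP, hramp⟩
      have hc : l - ((p : ℤ) - 1) * (r:ℤ) = (c : ℤ) := by linarith
      have htn : (l - ((p : ℤ) - 1) * (r:ℤ)).toNat = c := by omega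
      exact ⟨r, ⟨hb r c hP hramp, by omega, htn ▸ hP⟩, by rw [htn]⟩
    · rintro ⟨r', ⟨hrN, h0, hP⟩, heq⟩
      injection heq with h1 h2
      subst h1; subst h2
      have := Int.toNat_of_nonneg h0
      exact ⟨hP, by omega⟩
  rw [hset, Set.ncard_image_of_injective _ (fun a b h => by simpa using congrArg Prod.fst h),
    Set.ncard_coe_finset, Finset.card_filter]

open scoped Classical in
/-- Telescoping helper: indicator of a "blocked" addable/removable position. -/
noncomputable def TmD (p : ℕ) (f : ℕ → ℕ) (l : ℤ) : ℕ → ℤ := fun r =>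
  if l = (f (r-1) : ℤ) + ((p:ℤ)-1)*(r:ℤ) ∧ f r = f (r-1) ∧ r ≠ 0 then 1 else 0

open scoped Classical in
/-- Telescoping helper: indicator of the start of a row interval. -/
noncomputable def BD (p : ℕ) (l : ℤ) : ℕ → ℤ := fun r =>
  if l = ((p:ℤ)-1)*(r:ℤ) then 1 else 0

set_option maxHeartbeats 4000000 in
/-- For every `l`:
`rmp⁺_l(λ) − rmp⁻_{l−p}(λ) = δ_{l,0} − rmp_l(λ) + rmp_{l−1}(λ) + rmp_{l−p+1}(λ) − rmp_{l−p}(λ)`. -/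
theorem stmt3 (p : ℕ) (hp : 3 ≤ p) (f : ℕ → ℕ) (hf : IsPartition f) (l : ℤ) :
    (rmpAdd p f l : ℤ) - rmpRem p f (l - p) =
      (if l = 0 then 1 else 0) - rmp p f l + rmp p f (l - 1)
        + rmp p f (l - p + 1) - rmp p f (l - p) := by
  classical
  obtain ⟨hmono, N₀, hN₀⟩ := hf
  have hq2 : (2:ℤ) ≤ (p:ℤ) - 1 := by
    have : (3:ℤ) ≤ (p:ℤ) := by exact_mod_cast hp
    linarith
  have hp0 : (0:ℤ) ≤ (p:ℤ) := by positivity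
  set N : ℕ := max (l.toNat + 1) (N₀ + 1) with hN
  have hNl : l.toNat < N := by omega
  have hlN : l < (N:ℤ) := by
    have := Int.self_le_toNat l
    have : (l.toNat : ℤ) < N := by exact_mod_cast hNl
    omega
  have hbgen : ∀ l' : ℤ, l' ≤ l → ∀ r c : ℕ, (c:ℤ) + ((p:ℤ)-1)*(r:ℤ) = l' → r < N := by
    intro l' hl' r c h
    have h1 : (r:ℤ) ≤ ((p:ℤ)-1) * (r:ℤ) :=
      le_mul_of_one_le_left (by positivity) (by linarith)
    have h2 : ((p:ℤ)-1) * (r:ℤ) ≤ l' := by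
      have : (0:ℤ) ≤ (c:ℤ) := by positivity
      linarith
    have : (r:ℤ) < (N:ℤ) := by omega
    exact_mod_cast this
  rw [show rmpAdd p f l = _ from
      key_count p N l (Addable f) (fun r c _ h => hbgen l le_rfl r c h),
    show rmpRem p f (l-(p:ℤ)) = _ from
      key_count p N (l-(p:ℤ)) (Removable f) (fun r c _ h => hbgen (l-p) (by linarith) r c h),
    show rmp p f l = _ from
      key_count p N l (Cell f) (fun r c _ h => hbgen l le_rfl r c h),
    show rmp p f (l-1) = _ from
      key_count p N (l-1) (Cell f) (fun r c _ h => hbgen (l-1) (by linarith) r c h),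
    show rmp p f (l-(p:ℤ)+1) = _ from
      key_count p N (l-(p:ℤ)+1) (Cell f) (fun r c _ h => hbgen (l-p+1) (by linarith) r c h),
    show rmp p f (l-(p:ℤ)) = _ from
      key_count p N (l-(p:ℤ)) (Cell f) (fun r c _ h => hbgen (l-p) (by linarith) r c h)]
  push_cast
  have hrow : ∀ r : ℕ,
      (if 0 ≤ l - ((p:ℤ)-1)*(r:ℤ) ∧ Addable f r (l - ((p:ℤ)-1)*(r:ℤ)).toNat then (1:ℤ) else 0)
      - (if 0 ≤ (l-(p:ℤ)) - ((p:ℤ)-1)*(r:ℤ) ∧ Removable f r ((l-(p:ℤ)) - ((p:ℤ)-1)*(r:ℤ)).toNat then (1:ℤ) else 0)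
      + (if 0 ≤ l - ((p:ℤ)-1)*(r:ℤ) ∧ Cell f r (l - ((p:ℤ)-1)*(r:ℤ)).toNat then (1:ℤ) else 0)
      - (if 0 ≤ (l-1) - ((p:ℤ)-1)*(r:ℤ) ∧ Cell f r ((l-1) - ((p:ℤ)-1)*(r:ℤ)).toNat then (1:ℤ) else 0)
      - (if 0 ≤ (l-(p:ℤ)+1) - ((p:ℤ)-1)*(r:ℤ) ∧ Cell f r ((l-(p:ℤ)+1) - ((p:ℤ)-1)*(r:ℤ)).toNat then (1:ℤ) else 0)
      + (if 0 ≤ (l-(p:ℤ)) - ((p:ℤ)-1)*(r:ℤ) ∧ Cell f r ((l-(p:ℤ)) - ((p:ℤ)-1)*(r:ℤ)).toNat then (1:ℤ) else 0)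
      = (TmD p f l (r+1) - TmD p f l r) - (BD p l (r+1) - BD p l r) := by
    intro r
    have hba : f r ≤ f (r-1) := hmono (r-1) r (Nat.sub_le r 1)
    have hcb : f (r+1) ≤ f r := hmono r (r+1) (Nat.le_succ r)
    simp only [TmD, BD, Cell, Addable, Removable, Nat.add_sub_cancel, Nat.succ_ne_zero,
      ne_eq, not_false_eq_true, and_true, Nat.cast_add, Nat.cast_one]
    rw [show ((p:ℤ)-1)*((r:ℤ)+1) = ((p:ℤ)-1)*(r:ℤ) + ((p:ℤ)-1) from by ring]
    generalize ((p:ℤ)-1)*(r:ℤ) = m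
    split_ifs <;> omega
  have htel : ∑ r ∈ Finset.range N,
      ((TmD p f l (r+1) - TmD p f l r) - (BD p l (r+1) - BD p l r))
      = if l = 0 then (1:ℤ) else 0 := by
    rw [Finset.sum_sub_distrib, Finset.sum_range_sub (TmD p f l), Finset.sum_range_sub (BD p l)]
    have hfN : f (N-1) = 0 := hN₀ _ (by omega)
    have hNbig : l ≠ ((p:ℤ)-1) * (N:ℤ) := by
      intro h
      have h2 : (2:ℤ)*(N:ℤ) ≤ ((p:ℤ)-1)*(N:ℤ) :=
        mul_le_mul_of_nonneg_right hq2 (by positivity)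
      omega
    have h0 : TmD p f l 0 = 0 := by simp [TmD]
    have h1 : BD p l 0 = if l = 0 then (1:ℤ) else 0 := by simp [BD]
    have h2 : TmD p f l N = 0 := by
      simp only [TmD]
      rw [if_neg]
      rintro ⟨hl1, -, hl3⟩
      rw [hfN] at hl1
      exact hNbig (by simpa using hl1)
    have h3 : BD p l N = 0 := by simp only [BD]; rw [if_neg hNbig]
    rw [h0, h1, h2, h3]; ring
  have H : ∑ r ∈ Finset.range N,
      ((if 0 ≤ l - ((p:ℤ)-1)*(r:ℤ) ∧ Addable f r (l - ((p:ℤ)-1)*(r:ℤ)).toNat then (1:ℤ) else 0)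
      - (if 0 ≤ (l-(p:ℤ)) - ((p:ℤ)-1)*(r:ℤ) ∧ Removable f r ((l-(p:ℤ)) - ((p:ℤ)-1)*(r:ℤ)).toNat then (1:ℤ) else 0)
      + (if 0 ≤ l - ((p:ℤ)-1)*(r:ℤ) ∧ Cell f r (l - ((p:ℤ)-1)*(r:ℤ)).toNat then (1:ℤ) else 0)
      - (if 0 ≤ (l-1) - ((p:ℤ)-1)*(r:ℤ) ∧ Cell f r ((l-1) - ((p:ℤ)-1)*(r:ℤ)).toNat then (1:ℤ) else 0)
      - (if 0 ≤ (l-(p:ℤ)+1) - ((p:ℤ)-1)*(r:ℤ) ∧ Cell f r ((l-(p:ℤ)+1) - ((p:ℤ)-1)*(r:ℤ)).toNat then (1:ℤ) else 0)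
      + (if 0 ≤ (l-(p:ℤ)) - ((p:ℤ)-1)*(r:ℤ) ∧ Cell f r ((l-(p:ℤ)) - ((p:ℤ)-1)*(r:ℤ)).toNat then (1:ℤ) else 0))
      = if l = 0 then (1:ℤ) else 0 := by
    rw [Finset.sum_congr rfl fun r _ => hrow r]
    exact htel
  simp only [Finset.sum_add_distrib, Finset.sum_sub_distrib] at H
  linarith [H]
end

section
/- If λ and μ are partitions with λ^rest = μ^rest (equal p-restrictisations, i.e. rmp_l(λ) = rmp_l(μ) for all l), then rmp⁺_l(λ) − rmp⁻_{l−p}(λ) = rmp⁺_l(μ) − rmp⁻_{l−p}(μ) for every l. -/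
lemma ncard_graph (h : ℕ → ℕ) (P : ℕ → Prop) :
    {q : ℕ × ℕ | q.2 = h q.1 ∧ P q.1}.ncard = {r | P r}.ncard := by
  have himg : {q : ℕ × ℕ | q.2 = h q.1 ∧ P q.1} = (fun r => (r, h r)) '' {r | P r} := by
    ext ⟨r, c⟩
    simp only [Set.mem_setOf_eq, Set.mem_image]
    constructor
    · rintro ⟨hc, hP⟩; exact ⟨r, hP, by simp [hc]⟩
    · rintro ⟨s, hs, heq⟩
      obtain ⟨h1, h2⟩ := Prod.mk.injEq .. ▸ heq
      simp_all
  rw [himg, Set.ncard_image_of_injective]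
  intro a b hab; exact congrArg Prod.fst hab

lemma row_bound {p : ℕ} (hp : 3 ≤ p) {l : ℤ} {r : ℕ} (h : ((p:ℤ)-1) * r ≤ l) : (r : ℤ) ≤ l := by
  have hp' : (3:ℤ) ≤ p := by exact_mod_cast hp
  nlinarith [Int.natCast_nonneg r]

lemma finite_rows {p : ℕ} (hp : 3 ≤ p) (l : ℤ) (P : ℕ → Prop)
    (hP : ∀ r, P r → ((p:ℤ)-1) * r ≤ l) : {r | P r}.Finite := by
  apply (Set.finite_Iic l.toNat).subset
  intro r hr
  have := row_bound hp (hP r hr)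
  simp only [Set.mem_Iic]
  omega

lemma rmp_eq (p : ℕ) (f : ℕ → ℕ) (l : ℤ) :
    rmp p f l = {r : ℕ | ((p:ℤ)-1)*r ≤ l ∧ l < ((p:ℤ)-1)*r + f r}.ncard := by
  rw [rmp, show {q : ℕ × ℕ | Cell f q.1 q.2 ∧ rampOf p q.1 q.2 = l} =
      {q : ℕ × ℕ | q.2 = (l - ((p:ℤ)-1)*q.1).toNat ∧
        (((p:ℤ)-1)*q.1 ≤ l ∧ l < ((p:ℤ)-1)*q.1 + f q.1)} from ?_]
  · exact ncard_graph (fun r => (l - ((p:ℤ)-1)*r).toNat)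
      (fun r => (((p:ℤ)-1)*r ≤ l ∧ l < ((p:ℤ)-1)*r + f r))
  · ext ⟨r, c⟩
    simp only [Cell, rampOf, Set.mem_setOf_eq]
    generalize ((p:ℤ)-1) * (r:ℤ) = t
    omega

lemma rmpAdd_eq (p : ℕ) (f : ℕ → ℕ) (l : ℤ) :
    rmpAdd p f l = {r : ℕ | ((p:ℤ)-1)*r + f r = l ∧ (r = 0 ∨ f r < f (r-1))}.ncard := by
  rw [rmpAdd, show {q : ℕ × ℕ | Addable f q.1 q.2 ∧ rampOf p q.1 q.2 = l} =
      {q : ℕ × ℕ | q.2 = f q.1 ∧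
        (((p:ℤ)-1)*q.1 + f q.1 = l ∧ (q.1 = 0 ∨ f q.1 < f (q.1-1)))} from ?_]
  · exact ncard_graph (fun r => f r)
      (fun r => (((p:ℤ)-1)*r + f r = l ∧ (r = 0 ∨ f r < f (r-1))))
  · ext ⟨r, c⟩
    simp only [Addable, rampOf, Set.mem_setOf_eq]
    generalize ((p:ℤ)-1) * (r:ℤ) = t
    omega

lemma rmpRem_eq (p : ℕ) (f : ℕ → ℕ) (m : ℤ) :
    rmpRem p f m = {r : ℕ | ((p:ℤ)-1)*r + f r = m + 1 ∧ f (r+1) < f r}.ncard := by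
  rw [rmpRem, show {q : ℕ × ℕ | Removable f q.1 q.2 ∧ rampOf p q.1 q.2 = m} =
      {q : ℕ × ℕ | q.2 = f q.1 - 1 ∧
        (((p:ℤ)-1)*q.1 + f q.1 = m + 1 ∧ f (q.1+1) < f q.1)} from ?_]
  · exact ncard_graph (fun r => f r - 1)
      (fun r => (((p:ℤ)-1)*r + f r = m + 1 ∧ f (r+1) < f r))
  · ext ⟨r, c⟩
    simp only [Removable, rampOf, Set.mem_setOf_eq]
    generalize ((p:ℤ)-1) * (r:ℤ) = t
    omega

noncomputable def rowD (p : ℕ) (l : ℤ) : ℕ := {r : ℕ | ((p:ℤ)-1) * r ≤ l}.ncard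

lemma master (p : ℕ) (hp : 3 ≤ p) (f : ℕ → ℕ) (hf : IsPartition f) (l : ℤ) :
    (rmpAdd p f l : ℤ) - rmpRem p f (l - p) =
      ((rowD p l : ℤ) - rowD p (l-1) - rowD p (l-((p:ℤ)-1)) + rowD p (l-p))
      - rmp p f l + rmp p f (l-1) + rmp p f (l-((p:ℤ)-1)) - rmp p f (l-p) := by
  set k : ℤ := (p:ℤ) - 1 with hk
  have hp3 : (3:ℤ) ≤ (p:ℤ) := by exact_mod_cast hp
  have hk2 : (2:ℤ) ≤ k := by omega
  set A : ℕ → ℤ := fun r => k * r + f r with hA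
  have hAeq : ∀ r, A r = k * r + f r := fun r => rfl
  have hAk : ∀ r, k * r ≤ A r := fun r => by
    rw [hAeq]; exact le_add_of_nonneg_right (Int.natCast_nonneg _)
  have fin : ∀ (l' : ℤ) (P : ℕ → Prop), (∀ r, P r → A r ≤ l') → {r | P r}.Finite :=
    fun l' P hP => finite_rows hp l' P (fun r hr => le_trans (hAk r) (hP r hr))
  have finle : ∀ (l' : ℤ) (P : ℕ → Prop), (∀ r, P r → k * r ≤ l') → {r | P r}.Finite :=
    fun l' P hP => finite_rows hp l' P hP
  have hmono : ∀ r : ℕ, 0 < r → f r ≤ f (r-1) := fun r hr => hf.1 (r-1) r (by omega)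
  have hmono' : ∀ r : ℕ, f (r+1) ≤ f r := fun r => hf.1 r (r+1) (by omega)
  -- eq1 : B l = rows2 + E
  have eq1 : {r : ℕ | A r = l}.ncard
      = {r : ℕ | A r = l ∧ (r = 0 ∨ f r < f (r-1))}.ncard
        + {r : ℕ | 0 < r ∧ f r = f (r-1) ∧ A r = l}.ncard := by
    have hdis : Disjoint {r : ℕ | A r = l ∧ (r = 0 ∨ f r < f (r-1))}
        {r : ℕ | 0 < r ∧ f r = f (r-1) ∧ A r = l} := by
      rw [Set.disjoint_left]
      rintro r ⟨_, h1⟩ ⟨h2, h3, _⟩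
      rcases h1 with h1 | h1 <;> omega
    rw [← Set.ncard_union_eq hdis (fin l _ (fun r hr => le_of_eq hr.1))
      (fin l _ (fun r hr => le_of_eq hr.2.2))]
    congr 1
    ext r
    simp only [Set.mem_setOf_eq, Set.mem_union]
    constructor
    · intro h
      rcases Nat.eq_zero_or_pos r with h0 | h0
      · exact Or.inl ⟨h, Or.inl h0⟩
      · rcases lt_or_eq_of_le (hmono r h0) with h1 | h1
        · exact Or.inl ⟨h, Or.inr h1⟩
        · exact Or.inr ⟨h0, h1, h⟩
    · rintro (⟨h, _⟩ | ⟨_, _, h⟩) <;> exact h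
  -- eq2 : B (l-k) = rows3 + E'
  have eq2 : {r : ℕ | A r = l - k}.ncard
      = {r : ℕ | A r = l - k ∧ f (r+1) < f r}.ncard
        + {r : ℕ | f (r+1) = f r ∧ A r = l - k}.ncard := by
    have hdis : Disjoint {r : ℕ | A r = l - k ∧ f (r+1) < f r}
        {r : ℕ | f (r+1) = f r ∧ A r = l - k} := by
      rw [Set.disjoint_left]
      rintro r ⟨_, h1⟩ ⟨h2, _⟩
      omega
    rw [← Set.ncard_union_eq hdis (fin (l-k) _ (fun r hr => le_of_eq hr.1))
      (fin (l-k) _ (fun r hr => le_of_eq hr.2))]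
    congr 1
    ext r
    simp only [Set.mem_setOf_eq, Set.mem_union]
    constructor
    · intro h
      rcases lt_or_eq_of_le (hmono' r) with h1 | h1
      · exact Or.inl ⟨h, h1⟩
      · exact Or.inr ⟨h1, h⟩
    · rintro (⟨h, _⟩ | ⟨_, h⟩) <;> exact h
  -- eq3 : E = succ '' E'
  have eq3 : {r : ℕ | 0 < r ∧ f r = f (r-1) ∧ A r = l}.ncard
      = {r : ℕ | f (r+1) = f r ∧ A r = l - k}.ncard := by
    rw [show {r : ℕ | 0 < r ∧ f r = f (r-1) ∧ A r = l}
        = (fun s => s + 1) '' {r : ℕ | f (r+1) = f r ∧ A r = l - k} from ?_]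
    · exact Set.ncard_image_of_injective _ (add_left_injective 1)
    · ext r
      simp only [Set.mem_setOf_eq, Set.mem_image]
      constructor
      · rintro ⟨h0, h1, h2⟩
        have hr1 : r - 1 + 1 = r := by omega
        refine ⟨r - 1, ⟨by rw [hr1]; omega, ?_⟩, by omega⟩
        rw [hAeq] at h2 ⊢
        have hc : ((r-1 : ℕ) : ℤ) = (r : ℤ) - 1 := by omega
        have h5 : (f (r-1) : ℤ) = f r := by exact_mod_cast congrArg Nat.cast h1.symm
        rw [hc, h5]
        linarith
      · rintro ⟨s, ⟨h1, h2⟩, rfl⟩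
        refine ⟨by omega, by simp [h1], ?_⟩
        rw [hAeq] at h2 ⊢
        push_cast
        have h5 : (f (s+1) : ℤ) = f s := by exact_mod_cast congrArg Nat.cast h1
        linarith
  -- eq4 : C l' = C (l'-1) + B l'
  have eq4 : ∀ l' : ℤ, {r : ℕ | A r ≤ l'}.ncard
      = {r : ℕ | A r ≤ l' - 1}.ncard + {r : ℕ | A r = l'}.ncard := by
    intro l'
    have hdis : Disjoint {r : ℕ | A r ≤ l' - 1} {r : ℕ | A r = l'} := by
      rw [Set.disjoint_left]
      rintro r h1 h2
      simp only [Set.mem_setOf_eq] at h1 h2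
      omega
    rw [← Set.ncard_union_eq hdis (fin (l'-1) _ (fun r hr => hr))
      (fin l' _ (fun r hr => le_of_eq hr))]
    congr 1
    ext r
    simp only [Set.mem_setOf_eq, Set.mem_union]
    omega
  -- eq5 : D l' = C l' + rmp-rows l'
  have eq5 : ∀ l' : ℤ, {r : ℕ | k * r ≤ l'}.ncard
      = {r : ℕ | A r ≤ l'}.ncard + {r : ℕ | k*r ≤ l' ∧ l' < k*r + f r}.ncard := by
    intro l'
    have hdis : Disjoint {r : ℕ | A r ≤ l'} {r : ℕ | k*r ≤ l' ∧ l' < k*r + f r} := by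
      rw [Set.disjoint_left]
      rintro r h1 ⟨_, h2⟩
      simp only [Set.mem_setOf_eq, hAeq] at h1
      omega
    rw [← Set.ncard_union_eq hdis (fin l' _ (fun r hr => hr))
      (finle l' _ (fun r hr => hr.1))]
    congr 1
    ext r
    simp only [Set.mem_setOf_eq, Set.mem_union]
    rw [hAeq]
    have := hAk r
    constructor
    · intro h
      rcases le_or_gt (k * r + (f r : ℤ)) l' with h1 | h1
      · exact Or.inl h1
      · exact Or.inr ⟨h, h1⟩
    · rintro (h | ⟨h, _⟩)
      · exact le_trans (le_add_of_nonneg_right (Int.natCast_nonneg _)) h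
      · exact h
  -- rewrite goal
  have e2' : rmpRem p f (l - p) = {r : ℕ | A r = l - k ∧ f (r+1) < f r}.ncard := by
    rw [rmpRem_eq p f (l - p)]
    congr 1
    ext r
    simp only [Set.mem_setOf_eq, hAeq]
    constructor
    · rintro ⟨h, h'⟩; exact ⟨by rw [← hk] at h; omega, h'⟩
    · rintro ⟨h, h'⟩; refine ⟨by rw [← hk]; omega, h'⟩
  have e1 : rmpAdd p f l = {r : ℕ | A r = l ∧ (r = 0 ∨ f r < f (r-1))}.ncard := by
    rw [rmpAdd_eq p f l]
  have hrmp : ∀ l' : ℤ, rmp p f l' = {r : ℕ | k*r ≤ l' ∧ l' < k*r + f r}.ncard :=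
    fun l' => rmp_eq p f l'
  have hrowD : ∀ l' : ℤ, rowD p l' = {r : ℕ | k * r ≤ l'}.ncard := fun l' => rfl
  have hlp : l - (p:ℤ) = l - k - 1 := by omega
  rw [e1, e2', hrowD, hrowD, hrowD, hrowD, hrmp, hrmp, hrmp, hrmp, hlp]
  have key1 := eq4 l
  have key2 := eq4 (l - k)
  have key3 := eq5 l
  have key4 := eq5 (l-1)
  have key5 := eq5 (l-k)
  have key6 := eq5 (l-k-1)
  have z : ∀ a b c : ℕ, a = b + c → (a:ℤ) = b + c := fun a b c h => by exact_mod_cast h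
  linarith [z _ _ _ eq1, z _ _ _ eq2, Nat.cast_inj (R := ℤ) |>.mpr eq3,
    z _ _ _ key1, z _ _ _ key2, z _ _ _ key3, z _ _ _ key4, z _ _ _ key5, z _ _ _ key6]

/-- If `λ` and `μ` are partitions with the same `p`-restrictisation (equivalently, the
same number of nodes in each ramp), then `rmp⁺_l(λ) − rmp⁻_{l−p}(λ) = rmp⁺_l(μ) − rmp⁻_{l−p}(μ)`
for every `l`. -/
theorem stmt4 (p : ℕ) (hp : 3 ≤ p) (f g : ℕ → ℕ)
    (hf : IsPartition f) (hg : IsPartition g)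
    (hrest : ∀ l : ℤ, rmp p f l = rmp p g l) :
    ∀ l : ℤ, (rmpAdd p f l : ℤ) - rmpRem p f (l - p) =
      (rmpAdd p g l : ℤ) - rmpRem p g (l - p) := by
  intro l
  have h1 := master p hp f hf l
  have h2 := master p hp g hg l
  rw [h1, h2, hrest l, hrest (l-1), hrest (l-((p:ℤ)-1)), hrest (l-p)]
end

section
/- Let p be a prime and λ a partition, and let i ∈ {0,…,p−1}. Then the number of normal i-nodes of the p-restrictisation λ^rest is at most the number of removable i-nodes of λ, with equality if and only if λ does not have both a removable i-node and an addable i-node lying in a strictly later ramp. -/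
/-- The `p`-residue of the node `(r, c)`. -/
def res (p : ℕ) (r c : ℕ) : ZMod p := (c : ZMod p) - (r : ZMod p)

/-- `f` is `p`-restricted: successive differences of parts are `< p`. -/
def PRestricted (p : ℕ) (f : ℕ → ℕ) : Prop := ∀ r, f r < f (r + 1) + p

/-- `g` is the `p`-restrictisation `f^rest` of `f`: the (unique) `p`-restricted
partition with the same number of nodes in each ramp as `f` (obtained by sliding
all nodes in each ramp as far towards the first row as possible). -/
def IsRest (p : ℕ) (f g : ℕ → ℕ) : Prop :=
  IsPartition g ∧ PRestricted p g ∧ ∀ l : ℤ, rmp p g l = rmp p f l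

/-- Row `r` of `f` contains a removable node of residue `i`. -/
def RemRes (p : ℕ) (f : ℕ → ℕ) (i : ZMod p) (r : ℕ) : Prop :=
  ∃ c, Removable f r c ∧ res p r c = i

/-- Row `r` of `f` contains an addable node of residue `i`. -/
def AddRes (p : ℕ) (f : ℕ → ℕ) (i : ZMod p) (r : ℕ) : Prop :=
  ∃ c, Addable f r c ∧ res p r c = i

/-- Row `r` of `f` contains a normal `i`-node: a removable `i`-node whose `−` sign
survives the reduction of the `i`-signature (read top to bottom, `+` for addable
`i`-nodes and `−` for removable `i`-nodes, successively deleting adjacent pairs `−+`);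
equivalently, for every lower row `s` carrying an addable `i`-node, the number of
addable `i`-nodes in rows `(r, s]` is at most the number of removable `i`-nodes in
rows `(r, s)`. -/
def NormalRow (p : ℕ) (f : ℕ → ℕ) (i : ZMod p) (r : ℕ) : Prop :=
  RemRes p f i r ∧ ∀ s, r < s → AddRes p f i s →
    Set.ncard {t : ℕ | r < t ∧ t ≤ s ∧ AddRes p f i t} ≤
      Set.ncard {t : ℕ | r < t ∧ t < s ∧ RemRes p f i t}

/-- The number of normal `i`-nodes of `f`. -/
noncomputable def norCount (p : ℕ) (f : ℕ → ℕ) (i : ZMod p) : ℕ :=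
  Set.ncard {r : ℕ | NormalRow p f i r}

/-- The number of removable `i`-nodes of `f`. -/
noncomputable def remCount (p : ℕ) (f : ℕ → ℕ) (i : ZMod p) : ℕ :=
  Set.ncard {r : ℕ | RemRes p f i r}

/-- `f` has a removable `i`-node together with an addable `i`-node in a strictly
later ramp. -/
def HasRemAddLater (p : ℕ) (f : ℕ → ℕ) (i : ZMod p) : Prop :=
  ∃ r c s d, Removable f r c ∧ res p r c = i ∧ Addable f s d ∧ res p s d = i ∧
    rampOf p r c < rampOf p s d

namespace PfAux

/-- generic split lemma -/
lemma ncard_split {A B S : Set ℕ} (hu : S = A ∪ B) (hd : ∀ r, r ∈ A → r ∈ B → False)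
    (hfin : S.Finite) : S.ncard = A.ncard + B.ncard := by
  subst hu
  exact Set.ncard_union_eq (Set.disjoint_left.2 fun a ha hb => hd a ha hb)
    (hfin.subset Set.subset_union_left) (hfin.subset Set.subset_union_right)

open scoped Classical in
lemma cnt_succ (P : ℕ → Prop) (hfin : {s | P s}.Finite) (t : ℕ) :
    {s | P s ∧ t ≤ s}.ncard = {s | P s ∧ t+1 ≤ s}.ncard + (if P t then 1 else 0) := by
  by_cases h : P t
  · rw [if_pos h]
    rw [show {s | P s ∧ t+1 ≤ s}.ncard + 1 = {s | P s ∧ t+1 ≤ s}.ncard + ({t} : Set ℕ).ncard by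
      simp]
    apply ncard_split
    · ext s; simp only [Set.mem_setOf_eq, Set.mem_union, Set.mem_singleton_iff]
      constructor
      · rintro ⟨hp, hts⟩
        rcases eq_or_lt_of_le hts with h1 | h1
        · right; omega
        · left; exact ⟨hp, h1⟩
      · rintro (⟨hp, hts⟩ | rfl)
        · exact ⟨hp, by omega⟩
        · exact ⟨h, le_refl _⟩
    · intro r hr hr'
      simp only [Set.mem_setOf_eq, Set.mem_singleton_iff] at hr hr'
      omega
    · exact hfin.subset (fun s hs => hs.1)
  · rw [if_neg h, add_zero]
    congr 1
    ext s; simp only [Set.mem_setOf_eq]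
    constructor
    · rintro ⟨hp, hts⟩
      refine ⟨hp, ?_⟩
      rcases eq_or_lt_of_le hts with h1 | h1
      · exact absurd (h1 ▸ hp) h
      · omega
    · rintro ⟨hp, hts⟩; exact ⟨hp, by omega⟩

lemma cnt_window (P : ℕ → Prop) (hfin : {s | P s}.Finite) {r t : ℕ} (h : r ≤ t) :
    {s | P s ∧ r ≤ s}.ncard = {s | P s ∧ r ≤ s ∧ s < t}.ncard + {s | P s ∧ t ≤ s}.ncard := by
  apply ncard_split
  · ext s; simp only [Set.mem_setOf_eq, Set.mem_union]
    constructor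
    · rintro ⟨hp, hrs⟩
      by_cases hst : s < t
      · exact Or.inl ⟨hp, hrs, hst⟩
      · exact Or.inr ⟨hp, by omega⟩
    · rintro (⟨hp, hrs, _⟩ | ⟨hp, hts⟩)
      · exact ⟨hp, hrs⟩
      · exact ⟨hp, by omega⟩
  · intro s hs hs'
    simp only [Set.mem_setOf_eq] at hs hs'
    omega
  · exact hfin.subset (fun s hs => hs.1)

lemma cnt_empty (P : ℕ → Prop) {T t : ℕ} (hT : ∀ s, P s → s < T) (ht : T ≤ t) :
    {s | P s ∧ t ≤ s}.ncard = 0 := by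
  have he : {s | P s ∧ t ≤ s} = ∅ := by
    ext s; simp only [Set.mem_setOf_eq, Set.mem_empty_iff_false, iff_false]
    rintro ⟨hp, hts⟩
    exact absurd (hT s hp) (by omega)
  rw [he]; exact Set.ncard_empty _


variable (p q : ℕ) (i : ZMod p)

def RemS (x : ℕ → ℕ) (r : ℕ) : Prop :=
  x (r+1) ≠ x r + q ∧ ((x r : ZMod p) = i + 1)

def AddS (x : ℕ → ℕ) (r : ℕ) : Prop :=
  (r = 0 ∨ x r ≠ x (r-1) + q) ∧ ((x r : ZMod p) = i)

def NormalS (x : ℕ → ℕ) (r : ℕ) : Prop :=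
  RemS p q i x r ∧ ∀ s, r < s → AddS p q i x s →
    Set.ncard {t : ℕ | r < t ∧ t ≤ s ∧ AddS p q i x t} ≤
      Set.ncard {t : ℕ | r < t ∧ t < s ∧ RemS p q i x t}

def Tail (x : ℕ → ℕ) (N : ℕ) : Prop := ∀ r, N ≤ r → x r = q * r

section basic
variable {p q : ℕ} {i : ZMod p} {x : ℕ → ℕ} {N : ℕ}

lemma finite_le_val (hq1 : 1 ≤ q) (hN : Tail q x N) (W : ℕ) : {r | x r ≤ W}.Finite := by
  apply Set.Finite.subset (Set.finite_Iio (max N (W+1)))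
  intro r hr
  simp only [Set.mem_setOf_eq] at hr
  by_contra hc
  simp only [Set.mem_Iio, not_lt] at hc
  have h1 : x r = q * r := hN r (le_trans (le_max_left _ _) hc)
  have h2 : W + 1 ≤ r := le_trans (le_max_right _ _) hc
  nlinarith

lemma rem_sub_tail (hN : Tail q x N) : {r | RemS p q i x r} ⊆ Set.Iio N := by
  intro r hr
  simp only [Set.mem_setOf_eq, RemS] at hr
  by_contra hc
  simp only [Set.mem_Iio, not_lt] at hc
  exact hr.1 (by rw [hN r hc, hN (r+1) (by omega)]; ring)

lemma add_sub_tail (hN : Tail q x N) : {r | AddS p q i x r} ⊆ Set.Iio (N+1) := by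
  intro r hr
  simp only [Set.mem_setOf_eq, AddS] at hr
  by_contra hc
  simp only [Set.mem_Iio, not_lt] at hc
  rcases hr.1 with h0 | hne
  · omega
  · apply hne
    rw [hN r (by omega), hN (r-1) (by omega)]
    have h5 : r - 1 + 1 = r := by omega
    nlinarith [h5]

lemma rem_finite (hN : Tail q x N) : {r | RemS p q i x r}.Finite :=
  (Set.finite_Iio N).subset (rem_sub_tail hN)

lemma add_finite (hN : Tail q x N) : {r | AddS p q i x r}.Finite :=
  (Set.finite_Iio (N+1)).subset (add_sub_tail hN)

lemma exists_valbound (hN : Tail q x N) :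
    ∃ W, (∀ r, RemS p q i x r → x r ≤ W) ∧ (∀ r, AddS p q i x r → x r ≤ W) := by
  refine ⟨(Finset.range (N+1)).sup x, ?_, ?_⟩
  · intro r hr
    have := rem_sub_tail (i := i) hN hr
    exact Finset.le_sup (Finset.mem_range.2 (by simp at this; omega))
  · intro r hr
    have := add_sub_tail (i := i) hN hr
    exact Finset.le_sup (Finset.mem_range.2 (by simp at this; omega))

lemma rem_add_disj (hp2 : 2 ≤ p) {r : ℕ} (h1 : RemS p q i x r) (h2 : AddS p q i x r) : False := by
  have h0 : (i : ZMod p) + 1 = i := by rw [← h1.2, h2.2]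
  have h1 : (1 : ZMod p) = 0 := by
    have := congrArg (fun z => z - i) h0
    simpa [add_comm, add_sub_cancel_right] using this
  have hp1 : ((1:ℕ) : ZMod p) ≠ 0 := by
    intro hcon
    have hd := (ZMod.natCast_eq_zero_iff 1 p).1 hcon
    have := Nat.le_of_dvd one_pos hd
    omega
  exact hp1 (by exact_mod_cast h1)

end basic

section ballot
open scoped Classical

variable (x : ℕ → ℕ)

noncomputable def cR (t : ℕ) : ℕ := {s | RemS p q i x s ∧ t ≤ s}.ncard
noncomputable def cA (t : ℕ) : ℕ := {s | AddS p q i x s ∧ t ≤ s}.ncard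
noncomputable def dB (t : ℕ) : ℤ := (cR p q i x t : ℤ) - (cA p q i x t : ℤ)

variable {p q : ℕ} {i : ZMod p} {x : ℕ → ℕ} {N : ℕ}

lemma dB_tail (hN : Tail q x N) {t : ℕ} (ht : N + 1 ≤ t) : dB p q i x t = 0 := by
  have h1 : cR p q i x t = 0 :=
    cnt_empty _ (fun s hs => (rem_sub_tail (i := i) hN) hs) (by omega)
  have h2 : cA p q i x t = 0 :=
    cnt_empty _ (fun s hs => (add_sub_tail (i := i) hN) hs) (le_trans (by omega) ht)
  simp [dB, h1, h2]

lemma dB_step (hN : Tail q x N) (t : ℕ) : dB p q i x t =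
    dB p q i x (t+1) + (if RemS p q i x t then 1 else 0) - (if AddS p q i x t then 1 else 0) := by
  have h1 := cnt_succ (fun s => RemS p q i x s) (rem_finite hN) t
  have h2 := cnt_succ (fun s => AddS p q i x s) (add_finite hN) t
  simp only [dB, cR, cA]
  rw [h1, h2]
  push_cast
  split_ifs <;> push_cast <;> ring

lemma dB_window (hN : Tail q x N) {r t : ℕ} (hrt : r < t) :
    dB p q i x (r+1) - dB p q i x t =
      ({s | RemS p q i x s ∧ r < s ∧ s < t}.ncard : ℤ) -
      ({s | AddS p q i x s ∧ r < s ∧ s < t}.ncard : ℤ) := by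
  have h1 := cnt_window (fun s => RemS p q i x s) (rem_finite hN) (show r+1 ≤ t by omega)
  have h2 := cnt_window (fun s => AddS p q i x s) (add_finite hN) (show r+1 ≤ t by omega)
  have e1 : {s | RemS p q i x s ∧ r+1 ≤ s ∧ s < t} = {s | RemS p q i x s ∧ r < s ∧ s < t} := by
    ext s; simp only [Set.mem_setOf_eq]
    exact and_congr_right fun _ => by omega
  have e2 : {s | AddS p q i x s ∧ r+1 ≤ s ∧ s < t} = {s | AddS p q i x s ∧ r < s ∧ s < t} := by
    ext s; simp only [Set.mem_setOf_eq]
    exact and_congr_right fun _ => by omega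
  simp only [dB, cR, cA]
  rw [h1, h2, e1, e2]
  push_cast
  ring

lemma normal_iff (hp2 : 2 ≤ p) (hN : Tail q x N) (r : ℕ) :
    NormalS p q i x r ↔ RemS p q i x r ∧ ∀ t, r < t → dB p q i x t ≤ dB p q i x (r+1) := by
  constructor
  · rintro ⟨hrem, hnor⟩
    refine ⟨hrem, fun t hrt => ?_⟩
    have hwin := dB_window (i := i) hN hrt
    have hA : {u | AddS p q i x u ∧ r < u ∧ u < t}.ncard ≤
        {u | RemS p q i x u ∧ r < u ∧ u < t}.ncard := by
      rcases Set.eq_empty_or_nonempty {u | AddS p q i x u ∧ r < u ∧ u < t} with he | hne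
      · simp [he]
      · obtain ⟨s₀, hs₀, hmax⟩ := Set.exists_max_image _ id
          ((add_finite (i := i) hN).subset (fun u hu => hu.1)) hne
        simp only [Set.mem_setOf_eq] at hs₀
        have h1 := hnor s₀ hs₀.2.1 hs₀.1
        have e1 : {u | AddS p q i x u ∧ r < u ∧ u < t} = {u | r < u ∧ u ≤ s₀ ∧ AddS p q i x u} := by
          ext u; simp only [Set.mem_setOf_eq]
          constructor
          · rintro ⟨ha, hru, hut⟩
            exact ⟨hru, hmax u ⟨ha, hru, hut⟩, ha⟩
          · rintro ⟨hru, hus, ha⟩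
            exact ⟨ha, hru, by have h9 := hs₀.2.2; omega⟩
        have e2 : {u | r < u ∧ u < s₀ ∧ RemS p q i x u} ⊆ {u | RemS p q i x u ∧ r < u ∧ u < t} := by
          rintro u ⟨hru, hus, hrm⟩
          exact ⟨hrm, hru, by have h9 := hs₀.2.2; omega⟩
        rw [e1]
        exact le_trans h1 (Set.ncard_le_ncard e2 ((rem_finite (i := i) hN).subset (fun u hu => hu.1)))
    omega
  · rintro ⟨hrem, hd⟩
    refine ⟨hrem, fun s hrs hadd => ?_⟩
    have hwin := dB_window (i := i) hN (show r < s + 1 by omega)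
    have hds := hd (s+1) (by omega)
    have e1 : {u | RemS p q i x u ∧ r < u ∧ u < s+1} = {u | r < u ∧ u < s ∧ RemS p q i x u} := by
      ext u; simp only [Set.mem_setOf_eq]
      constructor
      · rintro ⟨hrm, hru, hus⟩
        refine ⟨hru, ?_, hrm⟩
        rcases Nat.lt_succ_iff_lt_or_eq.1 hus with h | rfl
        · exact h
        · exact absurd hadd (fun ha => (rem_add_disj hp2 hrm ha))
      · rintro ⟨hru, hus, hrm⟩
        exact ⟨hrm, hru, by omega⟩
    have e2 : {u | AddS p q i x u ∧ r < u ∧ u < s+1} = {u | r < u ∧ u ≤ s ∧ AddS p q i x u} := by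
      ext u; simp only [Set.mem_setOf_eq]
      constructor
      · rintro ⟨ha, hru, hus⟩; exact ⟨hru, by omega, ha⟩
      · rintro ⟨hru, hus, ha⟩; exact ⟨ha, hru, by omega⟩
    rw [e1, e2] at hwin
    omega

lemma count_le (hp2 : 2 ≤ p) (hN : Tail q x N) {C : ℕ} (hC : ∀ t, dB p q i x t ≤ (C : ℤ)) :
    {r | NormalS p q i x r}.ncard ≤ C := by
  classical
  set Nor := {r | NormalS p q i x r} with hNor
  have hNfin : Nor.Finite := (rem_finite (i := i) hN).subset (fun r hr => hr.1)
  have key : ∀ r ∈ Nor, RemS p q i x r ∧ 0 ≤ dB p q i x (r+1) ∧ dB p q i x r = dB p q i x (r+1) + 1 := by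
    intro r hr
    rw [hNor, Set.mem_setOf_eq, normal_iff hp2 hN] at hr
    obtain ⟨hrem, hd⟩ := hr
    have h0 : dB p q i x (N+1+r+1) = 0 := dB_tail hN (by omega)
    have hge : 0 ≤ dB p q i x (r+1) := by
      have := hd (N+1+r+1) (by omega); omega
    have hstep := dB_step (i := i) hN r
    rw [if_pos hrem, if_neg (fun ha => rem_add_disj hp2 hrem ha)] at hstep
    exact ⟨hrem, hge, by omega⟩
  set j : ℕ → ℕ := fun r => (dB p q i x (r+1) + 1).toNat with hj
  have hinj : Set.InjOn j Nor := by
    intro r hr r' hr' hjj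
    by_contra hne
    rcases Nat.lt_or_ge r r' with hlt | hge
    · have h1 := key r hr
      have h2 := key r' hr'
      have h3 : dB p q i x r' ≤ dB p q i x (r+1) := by
        rw [hNor, Set.mem_setOf_eq, normal_iff hp2 hN] at hr
        exact hr.2 r' hlt
      have : dB p q i x (r'+1) < dB p q i x (r+1) := by omega
      have := congrArg (Int.toNat) (rfl : dB p q i x (r+1) + 1 = dB p q i x (r+1) + 1)
      simp only [hj] at hjj
      omega
    · rcases Nat.lt_or_ge r' r with hlt | hge'
      · have h1 := key r hr
        have h2 := key r' hr'
        have h3 : dB p q i x r ≤ dB p q i x (r'+1) := by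
          rw [hNor, Set.mem_setOf_eq, normal_iff hp2 hN] at hr'
          exact hr'.2 r hlt
        simp only [hj] at hjj
        omega
      · omega
  have himg : j '' Nor ⊆ Set.Icc 1 C := by
    rintro _ ⟨r, hr, rfl⟩
    obtain ⟨hrem, hge, hstep⟩ := key r hr
    have hC1 := hC r
    simp only [Set.mem_Icc, hj]
    omega
  calc Nor.ncard = (j '' Nor).ncard := (Set.ncard_image_of_injOn hinj).symm
    _ ≤ (Set.Icc 1 C).ncard := Set.ncard_le_ncard himg (Set.finite_Icc _ _)
    _ = C := by rw [Set.ncard_eq_toFinset_card']; simp [Nat.card_Icc]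

lemma count_ge (hp2 : 2 ≤ p) (hN : Tail q x N) {k : ℕ} {t₀ : ℕ} (hk : (k : ℤ) ≤ dB p q i x t₀) :
    k ≤ {r | NormalS p q i x r}.ncard := by
  classical
  rcases Nat.eq_zero_or_pos k with rfl | hk0
  · omega
  set P : ℕ → ℕ → Prop := fun j t => (j:ℤ) ≤ dB p q i x t with hP
  have ht₀N : t₀ ≤ N + 1 := by
    by_contra hc
    rw [dB_tail (i := i) hN (show N + 1 ≤ t₀ by omega)] at hk
    omega
  set u : ℕ → ℕ := fun j => Nat.findGreatest (P j) (N+1) with hu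
  have hmax : ∀ (j t : ℕ), (1:ℤ) ≤ (j:ℤ) → u j < t → dB p q i x t ≤ (j:ℤ) - 1 := by
    intro j t hj hlt
    rcases le_or_gt t (N+1) with h | h
    · have hng := Nat.findGreatest_is_greatest hlt h
      rw [hP] at hng
      push_neg at hng
      omega
    · rw [dB_tail (i := i) hN (show N + 1 ≤ t by omega)]
      omega
  have key : ∀ j, 1 ≤ j → j ≤ k → NormalS p q i x (u j) ∧ dB p q i x (u j) = j := by
    intro j h1 h2
    have hPuj : P j (u j) := by
      apply Nat.findGreatest_spec (m := t₀) ht₀N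
      rw [hP]
      have : (j : ℤ) ≤ k := by exact_mod_cast h2
      omega
    have hnot : ∀ t, u j < t → dB p q i x t ≤ (j:ℤ) - 1 :=
      fun t hlt => hmax j t (by exact_mod_cast h1) hlt
    have hstep := dB_step (i := i) hN (u j)
    have hu1 : dB p q i x (u j + 1) ≤ (j:ℤ) - 1 := hnot _ (by omega)
    rw [hP] at hPuj
    have hRem : RemS p q i x (u j) := by
      by_contra hno
      rw [if_neg hno] at hstep
      split_ifs at hstep <;> omega
    have heq : dB p q i x (u j) = j := by
      rw [if_pos hRem, if_neg (fun ha => rem_add_disj hp2 hRem ha)] at hstep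
      omega
    refine ⟨(normal_iff hp2 hN _).2 ⟨hRem, fun t hlt => ?_⟩, heq⟩
    have := hnot t hlt
    rw [if_pos hRem, if_neg (fun ha => rem_add_disj hp2 hRem ha)] at hstep
    omega
  have hinj : Set.InjOn u (Set.Icc 1 k) := by
    intro j hj j' hj' hjj
    simp only [Set.mem_Icc] at hj hj'
    have e1 := (key j hj.1 hj.2).2
    have e2 := (key j' hj'.1 hj'.2).2
    rw [hjj] at e1
    have : (j:ℤ) = j' := by omega
    exact_mod_cast this
  have himg : u '' Set.Icc 1 k ⊆ {r | NormalS p q i x r} := by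
    rintro _ ⟨j, hj, rfl⟩
    simp only [Set.mem_Icc] at hj
    exact (key j hj.1 hj.2).1
  calc k = (Set.Icc 1 k).ncard := by rw [Set.ncard_eq_toFinset_card']; simp [Nat.card_Icc]
    _ = (u '' Set.Icc 1 k).ncard := (Set.ncard_image_of_injOn hinj).symm
    _ ≤ _ := Set.ncard_le_ncard himg ((rem_finite (i := i) hN).subset (fun r hr => hr.1))

end ballot

section transfer

variable (x : ℕ → ℕ)

noncomputable def vR (v : ℕ) : ℕ := {r | RemS p q i x r ∧ v ≤ x r}.ncard
noncomputable def vA (v : ℕ) : ℕ := {r | AddS p q i x r ∧ v ≤ x r}.ncard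
noncomputable def th (v : ℕ) : ℕ :=
  {r | x (r+1) = x r + q ∧ ((x r : ZMod p) = i + 1) ∧ x r < v ∧ v ≤ x (r+1)}.ncard

variable {p q : ℕ} {i : ZMod p} {x : ℕ → ℕ}

lemma cast_q_eq (hq : q + 1 = p) : ((q : ℕ) : ZMod p) = -1 := by
  subst hq
  have h := ZMod.natCast_self (q + 1)
  push_cast at h
  exact eq_neg_of_add_eq_zero_left h

lemma per_seq (hq : q + 1 = p) (hq1 : 1 ≤ q) {N : ℕ} (hN : Tail q x N) {v W : ℕ}
    (hW1 : ∀ r, RemS p q i x r → x r ≤ W) (hW2 : ∀ r, AddS p q i x r → x r ≤ W)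
    (hWv : v + q ≤ W) (hWcl : (W : ZMod p) = i) :
    ({r | (x r : ZMod p) = i + 1 ∧ v ≤ x r ∧ x r ≤ W}.ncard : ℤ) -
      ({r | (x r : ZMod p) = i ∧ v ≤ x r ∧ x r ≤ W}.ncard : ℤ)
    = (vR p q i x v : ℤ) - vA p q i x v - th p q i x v := by
  have hfW : {r | x r ≤ W}.Finite := finite_le_val hq1 hN W
  have hcq : ((q : ℕ) : ZMod p) = -1 := cast_q_eq hq
  -- step 1
  have step1 : {r | (x r : ZMod p) = i + 1 ∧ v ≤ x r ∧ x r ≤ W}.ncard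
      = vR p q i x v + {r | x (r+1) = x r + q ∧ ((x r : ZMod p) = i + 1) ∧ v ≤ x r ∧ x r ≤ W}.ncard := by
    apply ncard_split
    · ext r
      simp only [Set.mem_setOf_eq, Set.mem_union, RemS, vR]
      constructor
      · rintro ⟨hcl, hv, hW⟩
        by_cases hs : x (r+1) = x r + q
        · exact Or.inr ⟨hs, hcl, hv, hW⟩
        · exact Or.inl ⟨⟨hs, hcl⟩, hv⟩
      · rintro (⟨⟨hs, hcl⟩, hv⟩ | ⟨hs, hcl, hv, hW⟩)
        · exact ⟨hcl, hv, hW1 r ⟨hs, hcl⟩⟩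
        · exact ⟨hcl, hv, hW⟩
    · rintro r ⟨⟨hs, _⟩, _⟩ ⟨hs', _⟩
      exact hs hs'
    · exact hfW.subset (fun r hr => hr.2.2)
  -- step 2
  have step2 : {r | (x r : ZMod p) = i ∧ v ≤ x r ∧ x r ≤ W}.ncard
      = vA p q i x v + {r | r ≠ 0 ∧ x r = x (r-1) + q ∧ ((x r : ZMod p) = i) ∧ v ≤ x r ∧ x r ≤ W}.ncard := by
    apply ncard_split
    · ext r
      simp only [Set.mem_setOf_eq, Set.mem_union, AddS, vA]
      constructor
      · rintro ⟨hcl, hv, hW⟩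
        by_cases hs : r = 0 ∨ x r ≠ x (r-1) + q
        · exact Or.inl ⟨⟨hs, hcl⟩, hv⟩
        · push_neg at hs
          exact Or.inr ⟨hs.1, hs.2, hcl, hv, hW⟩
      · rintro (⟨⟨hs, hcl⟩, hv⟩ | ⟨h0, hs, hcl, hv, hW⟩)
        · exact ⟨hcl, hv, hW2 r ⟨hs, hcl⟩⟩
        · exact ⟨hcl, hv, hW⟩
    · rintro r ⟨⟨hs, _⟩, _⟩ ⟨h0, hs', _⟩
      rcases hs with h | h
      · exact h0 h
      · exact h hs'
    · exact hfW.subset (fun r hr => hr.2.2)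
  -- step 3 : shift bijection
  have step3 : {r | r ≠ 0 ∧ x r = x (r-1) + q ∧ ((x r : ZMod p) = i) ∧ v ≤ x r ∧ x r ≤ W}.ncard
      = {r | x (r+1) = x r + q ∧ ((x r : ZMod p) = i + 1) ∧ v ≤ x (r+1) ∧ x (r+1) ≤ W}.ncard := by
    have himg : {r | r ≠ 0 ∧ x r = x (r-1) + q ∧ ((x r : ZMod p) = i) ∧ v ≤ x r ∧ x r ≤ W}
        = (fun r => r + 1) '' {r | x (r+1) = x r + q ∧ ((x r : ZMod p) = i + 1) ∧ v ≤ x (r+1) ∧ x (r+1) ≤ W} := by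
      ext r
      simp only [Set.mem_setOf_eq, Set.mem_image]
      constructor
      · rintro ⟨h0, hs, hcl, hv, hW⟩
        have hr1 : r - 1 + 1 = r := by omega
        refine ⟨r - 1, ⟨?_, ?_, ?_, ?_⟩, by omega⟩
        · rw [hr1]; exact hs
        · have hxx : (x r : ZMod p) = (x (r-1) : ZMod p) + (q : ZMod p) := by
            rw [hs]; push_cast; ring
          rw [hcq] at hxx
          linear_combination hcl - hxx
        · rw [hr1]; exact hv
        · rw [hr1]; exact hW
      · rintro ⟨r', ⟨hs, hcl, hv, hW⟩, rfl⟩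
        refine ⟨by omega, by simpa using hs, ?_, hv, hW⟩
        have : (x (r'+1) : ZMod p) = (x r' : ZMod p) + (q : ZMod p) := by
          rw [hs]; push_cast; ring
        rw [hcq, hcl] at this
        rw [this]; ring
    rw [himg]
    exact Set.ncard_image_of_injOn (fun u _ u' _ h => by omega)
  -- step 4
  have step4 : {r | x (r+1) = x r + q ∧ ((x r : ZMod p) = i + 1) ∧ v ≤ x r ∧ x r ≤ W}.ncard
        + th p q i x v
      = {r | x (r+1) = x r + q ∧ ((x r : ZMod p) = i + 1) ∧ v ≤ x (r+1) ∧ x (r+1) ≤ W}.ncard := by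
    have hrho : {r | x (r+1) = x r + q ∧ ((x r : ZMod p) = i + 1) ∧ x r ≤ W ∧ W < x (r+1)} = ∅ := by
      ext r
      simp only [Set.mem_setOf_eq, Set.mem_empty_iff_false, iff_false]
      rintro ⟨hs, hcl, hxW, hWx⟩
      have hk : W - x r < q := by omega
      have hkq : ((W - x r : ℕ) : ZMod p) = ((q : ℕ) : ZMod p) := by
        have hWx' : (W : ZMod p) = (x r : ZMod p) + ((W - x r : ℕ) : ZMod p) := by
          rw [← Nat.cast_add]
          congr 1
          omega
        rw [hWcl, hcl, hcq] at *
        rw [hWx']  at *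
        linear_combination - hWx'
      have h1 : (W - x r) = q := by
        have := ZMod.val_cast_of_lt (show W - x r < p by omega)
        have := ZMod.val_cast_of_lt (show q < p by omega)
        rw [hkq] at *
        omega
      omega
    have hM1 : {r | x (r+1) = x r + q ∧ ((x r : ZMod p) = i + 1) ∧ v ≤ x (r+1) ∧ x r ≤ W}.ncard
        = {r | x (r+1) = x r + q ∧ ((x r : ZMod p) = i + 1) ∧ v ≤ x r ∧ x r ≤ W}.ncard
          + th p q i x v := by
      apply ncard_split
      · ext r
        simp only [Set.mem_setOf_eq, Set.mem_union, th]
        constructor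
        · rintro ⟨hs, hcl, hv, hW⟩
          by_cases hvr : v ≤ x r
          · exact Or.inl ⟨hs, hcl, hvr, hW⟩
          · exact Or.inr ⟨hs, hcl, by omega, hv⟩
        · rintro (⟨hs, hcl, hv, hW⟩ | ⟨hs, hcl, hv, hv'⟩)
          · exact ⟨hs, hcl, by omega, hW⟩
          · exact ⟨hs, hcl, hv', by omega⟩
      · rintro r ⟨_, _, hv, _⟩ h2
        simp only [Set.mem_setOf_eq, th] at h2
        omega
      · exact hfW.subset (fun r hr => hr.2.2.2)
    have hM2 : {r | x (r+1) = x r + q ∧ ((x r : ZMod p) = i + 1) ∧ v ≤ x (r+1) ∧ x r ≤ W}.ncard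
        = {r | x (r+1) = x r + q ∧ ((x r : ZMod p) = i + 1) ∧ v ≤ x (r+1) ∧ x (r+1) ≤ W}.ncard
          + ({r | x (r+1) = x r + q ∧ ((x r : ZMod p) = i + 1) ∧ x r ≤ W ∧ W < x (r+1)}).ncard := by
      apply ncard_split
      · ext r
        simp only [Set.mem_setOf_eq, Set.mem_union]
        constructor
        · rintro ⟨hs, hcl, hv, hW⟩
          by_cases hW' : x (r+1) ≤ W
          · exact Or.inl ⟨hs, hcl, hv, hW'⟩
          · exact Or.inr ⟨hs, hcl, hW, by omega⟩
        · rintro (⟨hs, hcl, hv, hW⟩ | ⟨hs, hcl, hW, hW'⟩)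
          · exact ⟨hs, hcl, hv, by omega⟩
          · exact ⟨hs, hcl, by omega, hW⟩
      · rintro r ⟨_, _, _, hW⟩ h2
        simp only [Set.mem_setOf_eq] at h2
        omega
      · exact hfW.subset (fun r hr => hr.2.2.2)
    rw [hrho] at hM2
    simp only [Set.ncard_empty, add_zero] at hM2
    omega
  have hff : th p q i x v = th p q i x v := rfl
  rw [step1, step2, step3]
  push_cast
  rw [← step4]
  push_cast
  ring

lemma mu_eq' {a b : ℕ → ℕ}
    (hcnt : ∀ l : ℕ, {r | b r ≤ l}.ncard = {r | a r ≤ l}.ncard)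
    {Na Nb : ℕ} (hNa : Tail q a Na) (hNb : Tail q b Nb) (hq1 : 1 ≤ q) (m : ℕ) :
    {r | b r = m}.ncard = {r | a r = m}.ncard := by
  rcases Nat.eq_zero_or_pos m with rfl | hm
  · have e : ∀ (x : ℕ → ℕ), {r | x r = 0} = {r | x r ≤ 0} := by
      intro x; ext r; simp [Nat.le_zero]
    rw [e a, e b]; exact hcnt 0
  · have h1 : ∀ (x : ℕ → ℕ) (Nx : ℕ), Tail q x Nx →
        {r | x r ≤ m}.ncard = {r | x r ≤ m - 1}.ncard + {r | x r = m}.ncard := by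
      intro x Nx hNx
      apply ncard_split
      · ext r; simp only [Set.mem_setOf_eq, Set.mem_union]; omega
      · intro r h1 h2; simp only [Set.mem_setOf_eq] at h1 h2; omega
      · exact finite_le_val hq1 hNx m
    have ha := h1 a Na hNa
    have hb := h1 b Nb hNb
    have := hcnt m
    have := hcnt (m-1)
    omega


lemma class_count_eq {a b : ℕ → ℕ}
    (hcnt : ∀ l : ℕ, {r | b r ≤ l}.ncard = {r | a r ≤ l}.ncard)
    {Na Nb : ℕ} (hNa : Tail q a Na) (hNb : Tail q b Nb) (hq1 : 1 ≤ q) (c : ZMod p) (v W : ℕ) :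
    {r | (b r : ZMod p) = c ∧ v ≤ b r ∧ b r ≤ W}.ncard
      = {r | (a r : ZMod p) = c ∧ v ≤ a r ∧ a r ≤ W}.ncard := by
  induction W with
  | zero =>
    by_cases hc0 : v = 0 ∧ ((0:ℕ) : ZMod p) = c
    · have e : ∀ (x : ℕ → ℕ), {r | (x r : ZMod p) = c ∧ v ≤ x r ∧ x r ≤ 0} = {r | x r = 0} := by
        intro x; ext r
        simp only [Set.mem_setOf_eq]
        constructor
        · rintro ⟨_, _, h⟩; omega
        · intro h; rw [h]; exact ⟨hc0.2, by omega, le_refl _⟩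
      rw [e a, e b]
      exact mu_eq' hcnt hNa hNb hq1 0
    · have e : ∀ (x : ℕ → ℕ), {r | (x r : ZMod p) = c ∧ v ≤ x r ∧ x r ≤ 0} = (∅ : Set ℕ) := by
        intro x; ext r
        simp only [Set.mem_setOf_eq, Set.mem_empty_iff_false, iff_false]
        rintro ⟨hcl, hv, h0⟩
        have hx0 : x r = 0 := by omega
        rw [hx0] at hcl hv
        exact hc0 ⟨by omega, hcl⟩
      rw [e a, e b]
  | succ W ih =>
    by_cases hg : v ≤ W + 1 ∧ ((W + 1 : ℕ) : ZMod p) = c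
    · have e : ∀ (x : ℕ → ℕ) (Nx : ℕ), Tail q x Nx → {r | (x r : ZMod p) = c ∧ v ≤ x r ∧ x r ≤ W + 1}.ncard
          = {r | (x r : ZMod p) = c ∧ v ≤ x r ∧ x r ≤ W}.ncard + {r | x r = W + 1}.ncard := by
        intro x Nx hNx
        apply ncard_split
        · ext r
          simp only [Set.mem_setOf_eq, Set.mem_union]
          constructor
          · rintro ⟨hcl, hv, hW⟩
            rcases Nat.lt_succ_iff_lt_or_eq.1 (Nat.lt_succ_of_le hW) with h | h
            · exact Or.inl ⟨hcl, hv, by omega⟩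
            · exact Or.inr h
          · rintro (⟨hcl, hv, hW⟩ | h)
            · exact ⟨hcl, hv, by omega⟩
            · rw [h]; exact ⟨hg.2, hg.1, le_refl _⟩
        · intro r h1 h2
          simp only [Set.mem_setOf_eq] at h1 h2
          omega
        · exact (finite_le_val hq1 hNx (W+1)).subset (fun r hr => hr.2.2)
      rw [e a Na hNa, e b Nb hNb, ih, mu_eq' hcnt hNa hNb hq1 (W+1)]
    · have e : ∀ (x : ℕ → ℕ), {r | (x r : ZMod p) = c ∧ v ≤ x r ∧ x r ≤ W + 1}
          = {r | (x r : ZMod p) = c ∧ v ≤ x r ∧ x r ≤ W} := by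
        intro x; ext r
        simp only [Set.mem_setOf_eq]
        constructor
        · rintro ⟨hcl, hv, hW⟩
          refine ⟨hcl, hv, ?_⟩
          rcases Nat.lt_succ_iff_lt_or_eq.1 (Nat.lt_succ_of_le hW) with h | h
          · omega
          · rw [h] at hcl hv
            exact absurd ⟨hv, hcl⟩ hg
        · rintro ⟨hcl, hv, hW⟩; exact ⟨hcl, hv, by omega⟩
      rw [e a, e b, ih]

lemma transfer (hq : q + 1 = p) (hq1 : 1 ≤ q) {a b : ℕ → ℕ}
    (hcnt : ∀ l : ℕ, {r | b r ≤ l}.ncard = {r | a r ≤ l}.ncard)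
    {Na Nb : ℕ} (hNa : Tail q a Na) (hNb : Tail q b Nb) (v : ℕ) :
    (vR p q i b v : ℤ) - vA p q i b v - th p q i b v
      = (vR p q i a v : ℤ) - vA p q i a v - th p q i a v := by
  have hp2 : 2 ≤ p := by omega
  haveI : NeZero p := ⟨by omega⟩
  obtain ⟨Wa, hWa1, hWa2⟩ := exists_valbound (i := i) hNa
  obtain ⟨Wb, hWb1, hWb2⟩ := exists_valbound (i := i) hNb
  set K := max (v + q) (max Wa Wb) with hK
  set W := (K + 1) * p + (i.val) with hW
  have hWK : K ≤ W := by
    have h3 : K + 1 ≤ (K+1) * p := Nat.le_mul_of_pos_right _ (by omega)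
    omega
  have hWcl : (W : ZMod p) = i := by
    rw [hW]
    push_cast
    rw [ZMod.natCast_self]
    simp [ZMod.natCast_val, ZMod.cast_id]
  have h1 := per_seq (i := i) hq hq1 hNa (fun r hr => le_trans (hWa1 r hr) (by omega))
      (fun r hr => le_trans (hWa2 r hr) (by omega)) (by omega) hWcl (v := v)
  have h2 := per_seq (i := i) hq hq1 hNb (fun r hr => le_trans (hWb1 r hr) (by omega))
      (fun r hr => le_trans (hWb2 r hr) (by omega)) (by omega) hWcl (v := v)
  rw [← h1, ← h2, class_count_eq hcnt hNa hNb hq1 (i+1) v W,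
    class_count_eq hcnt hNa hNb hq1 i v W]

end transfer

section core

variable {p q : ℕ} {i : ZMod p}

lemma add_one_ne (hp2 : 2 ≤ p) (j : ZMod p) : j + 1 ≠ j := by
  intro h
  have h1 : (1 : ZMod p) = 0 := by
    have := congrArg (fun z => z - j) h
    simpa [add_comm, add_sub_cancel_right] using this
  have hp1 : ((1:ℕ) : ZMod p) ≠ 0 := by
    intro hcon
    have hd := (ZMod.natCast_eq_zero_iff 1 p).1 hcon
    have := Nat.le_of_dvd one_pos hd
    omega
  exact hp1 (by exact_mod_cast h1)

lemma small_cast_ne_zero (hp2 : 2 ≤ p) {k : ℕ} (h0 : 0 < k) (h1 : k < p) :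
    ((k : ℕ) : ZMod p) ≠ 0 := by
  intro hcon
  have hd := (ZMod.natCast_eq_zero_iff k p).1 hcon
  have := Nat.le_of_dvd h0 hd
  omega

lemma small_cast_ne_q (hq : q + 1 = p) {k : ℕ} (h1 : k < q) :
    ((k : ℕ) : ZMod p) ≠ ((q : ℕ) : ZMod p) := by
  intro hcon
  have e1 := ZMod.val_cast_of_lt (show k < p by omega)
  have e2 := ZMod.val_cast_of_lt (show q < p by omega)
  rw [hcon, e2] at e1
  omega

variable {b : ℕ → ℕ} {Nb : ℕ}

lemma conv_a (hq1 : 1 ≤ q) (hNb : Tail q b Nb) (hmono : ∀ r s, r ≤ s → b r ≤ b s) (v : ℕ) :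
    ∃ t, dB p q i b t = (vR p q i b v : ℤ) - vA p q i b v := by
  have hex : ∃ r, v ≤ b r := by
    refine ⟨max Nb v, ?_⟩
    rw [hNb _ (le_max_left _ _)]
    calc v ≤ max Nb v := le_max_right _ _
      _ ≤ q * max Nb v := Nat.le_mul_of_pos_left _ (by omega)
  set t := Nat.find hex with ht
  have hiff : ∀ s, t ≤ s ↔ v ≤ b s := by
    intro s
    constructor
    · intro hts
      exact le_trans (Nat.find_spec hex) (hmono t s hts)
    · intro hvs
      exact Nat.find_min' hex hvs
  refine ⟨t, ?_⟩
  have e1 : {s | RemS p q i b s ∧ t ≤ s} = {s | RemS p q i b s ∧ v ≤ b s} := by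
    ext s; simp only [Set.mem_setOf_eq, hiff]
  have e2 : {s | AddS p q i b s ∧ t ≤ s} = {s | AddS p q i b s ∧ v ≤ b s} := by
    ext s; simp only [Set.mem_setOf_eq, hiff]
  simp only [dB, cR, cA, vR, vA, e1, e2]

lemma conv_b (hp2 : 2 ≤ p) (hq1 : 1 ≤ q) (hNb : Tail q b Nb)
    (hmono : ∀ r s, r ≤ s → b r ≤ b s) (t : ℕ) :
    ∃ v, dB p q i b t ≤ (vR p q i b v : ℤ) - vA p q i b v := by
  have hfR : {r | RemS p q i b r}.Finite := rem_finite hNb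
  have hfA : {r | AddS p q i b r}.Finite := add_finite hNb
  by_cases hcl : (b t : ZMod p) = i
  · refine ⟨b t + 1, ?_⟩
    have e1 : {s | RemS p q i b s ∧ t ≤ s} ⊆ {s | RemS p q i b s ∧ b t + 1 ≤ b s} := by
      rintro s ⟨hrm, hts⟩
      refine ⟨hrm, ?_⟩
      have h1 := hmono t s hts
      rcases eq_or_lt_of_le h1 with h | h
      · exfalso
        have h2 : (b s : ZMod p) = i := by rw [← h]; exact hcl
        rw [hrm.2] at h2
        exact absurd h2 (add_one_ne hp2 i)
      · omega
    have e2 : {s | AddS p q i b s ∧ b t + 1 ≤ b s} ⊆ {s | AddS p q i b s ∧ t ≤ s} := by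
      rintro s ⟨ha, hvs⟩
      refine ⟨ha, ?_⟩
      by_contra hc
      have := hmono s t (by omega)
      omega
    have i1 : cR p q i b t ≤ vR p q i b (b t + 1) :=
      Set.ncard_le_ncard e1 (hfR.subset (fun r hr => hr.1))
    have i2 : vA p q i b (b t + 1) ≤ cA p q i b t :=
      Set.ncard_le_ncard e2 (hfA.subset (fun r hr => hr.1))
    simp only [dB]
    push_cast
    omega
  · refine ⟨b t, ?_⟩
    have e1 : {s | RemS p q i b s ∧ t ≤ s} ⊆ {s | RemS p q i b s ∧ b t ≤ b s} := by
      rintro s ⟨hrm, hts⟩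
      exact ⟨hrm, hmono t s hts⟩
    have e2 : {s | AddS p q i b s ∧ b t ≤ b s} ⊆ {s | AddS p q i b s ∧ t ≤ s} := by
      rintro s ⟨ha, hvs⟩
      refine ⟨ha, ?_⟩
      by_contra hc
      have h1 := hmono s t (by omega)
      have h2 : b s = b t := by omega
      rw [← h2] at hcl
      exact hcl ha.2
    have i1 : cR p q i b t ≤ vR p q i b (b t) :=
      Set.ncard_le_ncard e1 (hfR.subset (fun r hr => hr.1))
    have i2 : vA p q i b (b t) ≤ cA p q i b t :=
      Set.ncard_le_ncard e2 (hfA.subset (fun r hr => hr.1))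
    simp only [dB]
    push_cast
    omega

lemma theta_le_one (hq1 : 1 ≤ q) (hNb : Tail q b Nb)
    (hmono : ∀ r s, r ≤ s → b r ≤ b s) (v : ℕ) : th p q i b v ≤ 1 := by
  by_contra hc
  push_neg at hc
  have hfin : {r | b (r+1) = b r + q ∧ ((b r : ZMod p) = i + 1) ∧ b r < v ∧ v ≤ b (r+1)}.Finite := by
    apply (finite_le_val hq1 hNb v).subset
    rintro r ⟨_, _, h, _⟩
    simp only [Set.mem_setOf_eq]
    omega
  obtain ⟨r, r', hr, hr', hne⟩ := (Set.one_lt_ncard_iff hfin).1 hc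
  simp only [Set.mem_setOf_eq] at hr hr'
  rcases Nat.lt_or_ge r r' with h | h
  · have := hmono (r+1) r' (by omega)
    omega
  · have h' : r' < r := by omega
    have := hmono (r'+1) r (by omega)
    omega

lemma theta_trans {a : ℕ → ℕ} {Na : ℕ} (hq1 : 1 ≤ q)
    (hcnt : ∀ l : ℕ, {r | b r ≤ l}.ncard = {r | a r ≤ l}.ncard)
    (hNa : Tail q a Na) (hNb : Tail q b Nb) {v : ℕ} (hne : th p q i b v ≠ 0) :
    ∃ m : ℕ, ((m : ZMod p) = i + 1 ∧ m < v ∧ v ≤ m + q) ∧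
      (th p q i a v ≠ 0 ∨ ∃ r, RemS p q i a r ∧ a r = m) := by
  obtain ⟨r₀, hr₀⟩ := Set.nonempty_of_ncard_ne_zero hne
  simp only [Set.mem_setOf_eq] at hr₀
  obtain ⟨hs, hcl, hlt, hge⟩ := hr₀
  refine ⟨b r₀, ⟨hcl, hlt, by omega⟩, ?_⟩
  have hmub : {r | b r = b r₀}.ncard ≠ 0 := by
    have hfin : {r | b r = b r₀}.Finite := by
      apply (finite_le_val hq1 hNb (b r₀)).subset
      intro r hr; simp only [Set.mem_setOf_eq] at hr ⊢; omega
    have := (Set.ncard_pos hfin).2 ⟨r₀, rfl⟩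
    omega
  have hmua : {r | a r = b r₀}.ncard ≠ 0 := by
    rw [← mu_eq' hcnt hNa hNb hq1]
    exact hmub
  obtain ⟨r₁, hr₁⟩ := Set.nonempty_of_ncard_ne_zero hmua
  simp only [Set.mem_setOf_eq] at hr₁
  by_cases ha : a (r₁ + 1) = a r₁ + q
  · left
    have hfin : {r | a (r+1) = a r + q ∧ ((a r : ZMod p) = i + 1) ∧ a r < v ∧ v ≤ a (r+1)}.Finite := by
      apply (finite_le_val hq1 hNa v).subset
      rintro r ⟨_, _, h, _⟩
      simp only [Set.mem_setOf_eq]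
      omega
    have : r₁ ∈ {r | a (r+1) = a r + q ∧ ((a r : ZMod p) = i + 1) ∧ a r < v ∧ v ≤ a (r+1)} := by
      refine ⟨ha, ?_, ?_, ?_⟩
      · rw [hr₁]; exact hcl
      · omega
      · omega
    have := (Set.ncard_pos hfin).2 ⟨r₁, this⟩
    simp only [th]
    omega
  · right
    refine ⟨r₁, ⟨ha, ?_⟩, hr₁⟩
    rw [hr₁]; exact hcl

end core



section coremain

open scoped Classical

variable {p q : ℕ} {i : ZMod p}

theorem core (hq : q + 1 = p) (hq1 : 1 ≤ q) (a b : ℕ → ℕ) {Na Nb : ℕ}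
    (hNa : Tail q a Na) (hNb : Tail q b Nb) (hmono : ∀ r s, r ≤ s → b r ≤ b s)
    (hcnt : ∀ l : ℕ, {r | b r ≤ l}.ncard = {r | a r ≤ l}.ncard) :
    {r | NormalS p q i b r}.ncard ≤ {r | RemS p q i a r}.ncard ∧
      ({r | NormalS p q i b r}.ncard = {r | RemS p q i a r}.ncard ↔
        ¬ ∃ r s, RemS p q i a r ∧ AddS p q i a s ∧ a r ≤ a s) := by
  have hp2 : 2 ≤ p := by omega
  have hfRa : {r | RemS p q i a r}.Finite := rem_finite hNa
  have hfAa : {r | AddS p q i a r}.Finite := add_finite hNa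
  set remf := {r | RemS p q i a r}.ncard with hremf
  have hfL : ∀ v : ℕ, {r | RemS p q i a r ∧ a r < v}.Finite :=
    fun v => hfRa.subset (fun r hr => hr.1)
  have hsplit : ∀ v : ℕ, remf = vR p q i a v + {r | RemS p q i a r ∧ a r < v}.ncard := by
    intro v
    apply ncard_split
    · ext r
      simp only [Set.mem_setOf_eq, Set.mem_union, vR]
      constructor
      · intro h
        by_cases hv : v ≤ a r
        · exact Or.inl ⟨h, hv⟩
        · exact Or.inr ⟨h, by omega⟩
      · rintro (⟨h, _⟩ | ⟨h, _⟩) <;> exact h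
    · rintro r ⟨_, h1⟩ ⟨_, h2⟩
      omega
    · exact hfRa
  have htr := transfer (i := i) hq hq1 hcnt hNa hNb
  have hG1 : ∀ v : ℕ, (vR p q i b v : ℤ) - vA p q i b v ≤ (remf : ℤ) := by
    intro v
    have ht := htr v
    have hsp := hsplit v
    have hle1 := theta_le_one (i := i) hq1 hNb hmono v
    by_cases hz : th p q i b v = 0
    · omega
    · obtain ⟨m, ⟨hmcl, hmlt, hmge⟩, hbr⟩ := theta_trans hq1 hcnt hNa hNb hz
      rcases hbr with hta | ⟨r', hrem', hval'⟩
      · have := Nat.pos_of_ne_zero hta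
        omega
      · have hL : 1 ≤ {r | RemS p q i a r ∧ a r < v}.ncard :=
          (Set.ncard_pos (hfL v)).2 ⟨r', hrem', by omega⟩
        omega
  have norm_le : {r | NormalS p q i b r}.ncard ≤ remf := by
    apply count_le hp2 hNb
    intro t
    obtain ⟨v, hv⟩ := conv_b hp2 hq1 hNb hmono t
    exact le_trans hv (hG1 v)
  by_cases hHas : ∃ r s, RemS p q i a r ∧ AddS p q i a s ∧ a r ≤ a s
  · obtain ⟨rr, sw, hrr, hsw, hlerr⟩ := hHas
    have hremf1 : 1 ≤ remf := (Set.ncard_pos hfRa).2 ⟨rr, hrr⟩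
    have hG3 : ∀ v : ℕ, (vR p q i b v : ℤ) - vA p q i b v ≤ (remf : ℤ) - 1 := by
      intro v
      have ht := htr v
      have hsp := hsplit v
      have hle1 := theta_le_one (i := i) hq1 hNb hmono v
      by_cases hvsw : v ≤ a sw
      · have hA : 1 ≤ vA p q i a v :=
          (Set.ncard_pos (hfAa.subset (fun r hr => hr.1))).2 ⟨sw, hsw, hvsw⟩
        by_cases hz : th p q i b v = 0
        · omega
        · obtain ⟨m, ⟨hmcl, hmlt, hmge⟩, hbr⟩ := theta_trans hq1 hcnt hNa hNb hz
          rcases hbr with hta | ⟨r', hrem', hval'⟩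
          · have := Nat.pos_of_ne_zero hta
            omega
          · have hL : 1 ≤ {r | RemS p q i a r ∧ a r < v}.ncard :=
              (Set.ncard_pos (hfL v)).2 ⟨r', hrem', by omega⟩
            omega
      · have hrwv : a rr < v := by omega
        have hL1 : 1 ≤ {r | RemS p q i a r ∧ a r < v}.ncard :=
          (Set.ncard_pos (hfL v)).2 ⟨rr, hrr, hrwv⟩
        by_cases hz : th p q i b v = 0
        · omega
        · obtain ⟨m, ⟨hmcl, hmlt, hmge⟩, hbr⟩ := theta_trans hq1 hcnt hNa hNb hz
          rcases hbr with hta | ⟨r', hrem', hval'⟩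
          · have := Nat.pos_of_ne_zero hta
            omega
          · by_cases hmrw : a rr = m
            · exfalso
              have hswm : m ≤ a sw := by omega
              have hswlt : a sw < m + q := by omega
              have hk : ((a sw - m : ℕ) : ZMod p) = ((q : ℕ) : ZMod p) := by
                have hcast : ((a sw : ℕ) : ZMod p) = ((m : ℕ) : ZMod p) + ((a sw - m : ℕ) : ZMod p) := by
                  rw [← Nat.cast_add]
                  congr 1
                  omega
                rw [hsw.2, hmcl] at hcast
                rw [cast_q_eq hq]
                linear_combination -hcast
              exact small_cast_ne_q hq (by omega) hk
            · have hL2 : 2 ≤ {r | RemS p q i a r ∧ a r < v}.ncard := by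
                rw [show (2:ℕ) = 1 + 1 by rfl]
                apply Nat.succ_le_of_lt
                apply (Set.one_lt_ncard_iff (hfL v)).2
                exact ⟨rr, r', ⟨hrr, hrwv⟩, ⟨hrem', by omega⟩, fun hc => hmrw (by rw [hc, hval'])⟩
              omega
    have hlt : {r | NormalS p q i b r}.ncard < remf := by
      have hle : {r | NormalS p q i b r}.ncard ≤ remf - 1 := by
        apply count_le hp2 hNb
        intro t
        obtain ⟨v, hv⟩ := conv_b (i := i) hp2 hq1 hNb hmono t
        have := hG3 v
        have hc : ((remf - 1 : ℕ) : ℤ) = (remf : ℤ) - 1 := by omega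
        omega
      omega
    refine ⟨norm_le, ⟨fun h => absurd h (by omega), fun h => absurd ⟨rr, sw, hrr, hsw, hlerr⟩ h⟩⟩
  · by_cases hz0 : remf = 0
    · refine ⟨norm_le, ⟨fun _ => hHas, fun _ => by omega⟩⟩
    · have hne : {r | RemS p q i a r}.Nonempty := Set.nonempty_of_ncard_ne_zero hz0
      obtain ⟨rs, hrs, hmin⟩ := Set.exists_min_image _ a hfRa hne
      simp only [Set.mem_setOf_eq] at hrs
      set v := a rs with hv
      have hvR : vR p q i a v = remf := by
        rw [hremf]
        simp only [vR]
        congr 1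
        ext r
        simp only [Set.mem_setOf_eq]
        exact ⟨fun h => h.1, fun h => ⟨h, hmin r h⟩⟩
      have hvA : vA p q i a v = 0 := by
        have : {r | AddS p q i a r ∧ v ≤ a r} = ∅ := by
          ext s
          simp only [Set.mem_setOf_eq, Set.mem_empty_iff_false, iff_false]
          rintro ⟨hadd, hge⟩
          exact hHas ⟨rs, s, hrs, hadd, hge⟩
        simp only [vA]
        rw [this]
        exact Set.ncard_empty _
      have hclv : (v : ZMod p) = i + 1 := hrs.2
      have hth0 : ∀ (x : ℕ → ℕ), th p q i x v = 0 := by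
        intro x
        have : {r | x (r+1) = x r + q ∧ ((x r : ZMod p) = i + 1) ∧ x r < v ∧ v ≤ x (r+1)} = ∅ := by
          ext r
          simp only [Set.mem_setOf_eq, Set.mem_empty_iff_false, iff_false]
          rintro ⟨hs, hcl, hlt, hge⟩
          have hk : ((v - x r : ℕ) : ZMod p) = 0 := by
            have hcast : ((v : ℕ) : ZMod p) = ((x r : ℕ) : ZMod p) + ((v - x r : ℕ) : ZMod p) := by
              rw [← Nat.cast_add]
              congr 1
              omega
            rw [hclv, hcl] at hcast
            linear_combination -hcast
          exact small_cast_ne_zero hp2 (by omega) (by omega) hk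
        simp only [th]
        rw [this]
        exact Set.ncard_empty _
      have ht := htr v
      rw [hvR, hvA, hth0 a, hth0 b] at ht
      obtain ⟨t, hdt⟩ := conv_a (i := i) hq1 hNb hmono v
      have hge : remf ≤ {r | NormalS p q i b r}.ncard := by
        apply count_ge hp2 hNb (t₀ := t)
        rw [hdt]
        omega
      exact ⟨norm_le, ⟨fun _ => hHas, fun _ => le_antisymm norm_le hge⟩⟩

end coremain

end PfAux

namespace PfAux

def Bv (p : ℕ) (f : ℕ → ℕ) : ℕ → ℕ := fun r => f r + (p-1) * r

variable {p : ℕ} {i : ZMod p} {f : ℕ → ℕ}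

lemma cast_Bv (hp2 : 2 ≤ p) (f : ℕ → ℕ) (r : ℕ) :
    ((Bv p f r : ℕ) : ZMod p) = (f r : ZMod p) - (r : ZMod p) := by
  have hq : (p - 1) + 1 = p := by omega
  have h := cast_q_eq (p := p) (q := p - 1) hq
  simp only [Bv]
  push_cast
  rw [h]
  ring

lemma remRes_iff (hp2 : 2 ≤ p) (hfm : ∀ m n : ℕ, m ≤ n → f n ≤ f m) (r : ℕ) :
    RemRes p f i r ↔ RemS p (p-1) i (Bv p f) r := by
  have hB := cast_Bv hp2 f r
  have hring : (p-1)*(r+1) = (p-1)*r + (p-1) := by ring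
  have hle : f (r+1) ≤ f r := hfm r (r+1) (by omega)
  constructor
  · rintro ⟨c, ⟨hc1, hc2⟩, hres⟩
    constructor
    · simp only [Bv]
      omega
    · rw [hB]
      have hcast : ((c : ℕ) : ZMod p) + 1 = ((f r : ℕ) : ZMod p) := by
        exact_mod_cast congrArg (fun n : ℕ => (n : ZMod p)) hc1
      rw [res] at hres
      linear_combination hres - hcast
  · rintro ⟨hstep, hcl⟩
    have hlt : f (r+1) < f r := by
      simp only [Bv] at hstep
      omega
    refine ⟨f r - 1, ⟨by omega, hlt⟩, ?_⟩
    rw [res]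
    have hcast : ((f r - 1 : ℕ) : ZMod p) + 1 = ((f r : ℕ) : ZMod p) := by
      have : (f r - 1) + 1 = f r := by omega
      exact_mod_cast congrArg (fun n : ℕ => (n : ZMod p)) this
    rw [hB] at hcl
    linear_combination hcl + hcast

lemma addRes_iff (hp2 : 2 ≤ p) (hfm : ∀ m n : ℕ, m ≤ n → f n ≤ f m) (r : ℕ) :
    AddRes p f i r ↔ AddS p (p-1) i (Bv p f) r := by
  have hB := cast_Bv hp2 f r
  constructor
  · rintro ⟨c, ⟨hc1, hc2⟩, hres⟩
    subst hc1
    constructor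
    · rcases hc2 with h0 | hlt
      · exact Or.inl h0
      · right
        intro hcon
        simp only [Bv] at hcon
        rcases Nat.eq_zero_or_pos r with rfl | hr
        · rw [show (0:ℕ) - 1 = 0 from rfl] at hlt
          omega
        · have hring : (p-1)*(r-1) + (p-1) = (p-1)*r := by
            have : r - 1 + 1 = r := by omega
            calc (p-1)*(r-1) + (p-1) = (p-1)*((r-1)+1) := by ring
              _ = (p-1)*r := by rw [this]
          omega
    · rw [hB]
      rw [res] at hres
      exact hres
  · rintro ⟨hstep, hcl⟩
    refine ⟨f r, ⟨rfl, ?_⟩, ?_⟩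
    · rcases hstep with h0 | hne
      · exact Or.inl h0
      · rcases Nat.eq_zero_or_pos r with rfl | hr
        · exact Or.inl rfl
        · right
          have hle : f r ≤ f (r-1) := hfm (r-1) r (by omega)
          have hring : (p-1)*(r-1) + (p-1) = (p-1)*r := by
            have h1 : r - 1 + 1 = r := by omega
            calc (p-1)*(r-1) + (p-1) = (p-1)*((r-1)+1) := by ring
              _ = (p-1)*r := by rw [h1]
          simp only [Bv] at hne
          omega
    · rw [res, ← hB]
      exact hcl

lemma normalRow_iff (hp2 : 2 ≤ p) (hfm : ∀ m n : ℕ, m ≤ n → f n ≤ f m) (r : ℕ) :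
    NormalRow p f i r ↔ NormalS p (p-1) i (Bv p f) r := by
  unfold NormalRow NormalS
  apply and_congr (remRes_iff hp2 hfm r)
  apply forall_congr'
  intro s
  apply imp_congr Iff.rfl
  apply imp_congr (addRes_iff hp2 hfm s)
  have e1 : {t | r < t ∧ t ≤ s ∧ AddRes p f i t} = {t | r < t ∧ t ≤ s ∧ AddS p (p-1) i (Bv p f) t} := by
    ext t
    simp only [Set.mem_setOf_eq]
    exact and_congr Iff.rfl (and_congr Iff.rfl (addRes_iff hp2 hfm t))
  have e2 : {t | r < t ∧ t < s ∧ RemRes p f i t} = {t | r < t ∧ t < s ∧ RemS p (p-1) i (Bv p f) t} := by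
    ext t
    simp only [Set.mem_setOf_eq]
    exact and_congr Iff.rfl (and_congr Iff.rfl (remRes_iff hp2 hfm t))
  rw [e1, e2]

lemma ramp_cast (hp2 : 2 ≤ p) (r c : ℕ) :
    rampOf p r c = (c : ℤ) + ((p - 1 : ℕ) : ℤ) * (r : ℤ) := by
  rw [rampOf]
  have : ((p - 1 : ℕ) : ℤ) = (p : ℤ) - 1 := by
    push_cast [Nat.cast_sub (show 1 ≤ p by omega)]
    ring
  rw [this]

lemma rmp_eq_rowcount (hp2 : 2 ≤ p) (x : ℕ → ℕ) (l : ℕ) :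
    rmp p x (l : ℤ) = {r : ℕ | (p-1) * r ≤ l ∧ l < Bv p x r}.ncard := by
  rw [rmp]
  have himg : {qq : ℕ × ℕ | Cell x qq.1 qq.2 ∧ rampOf p qq.1 qq.2 = (l:ℤ)}
      = (fun r => (r, l - (p-1)*r)) '' {r : ℕ | (p-1) * r ≤ l ∧ l < Bv p x r} := by
    ext ⟨r, c⟩
    simp only [Set.mem_setOf_eq, Set.mem_image, Cell, Prod.mk.injEq]
    constructor
    · rintro ⟨hcell, hramp⟩
      rw [ramp_cast hp2] at hramp
      have hc : c + (p-1)*r = l := by exact_mod_cast hramp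
      refine ⟨r, ⟨by omega, ?_⟩, rfl, by omega⟩
      simp only [Bv]
      omega
    · rintro ⟨r', ⟨h1, h2⟩, rfl, rfl⟩
      simp only [Bv] at h2
      constructor
      · omega
      · rw [ramp_cast hp2]
        push_cast
        omega
  rw [himg]
  apply Set.ncard_image_of_injOn
  intro u _ u' _ h
  exact congrArg Prod.fst h

lemma count_from_rmp (hp2 : 2 ≤ p) (x : ℕ → ℕ) (l : ℕ) :
    {r : ℕ | (p-1) * r ≤ l}.ncard = rmp p x (l : ℤ) + {r : ℕ | Bv p x r ≤ l}.ncard := by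
  rw [rmp_eq_rowcount hp2]
  apply ncard_split
  · ext r
    simp only [Set.mem_setOf_eq, Set.mem_union, Bv]
    constructor
    · intro h
      by_cases hb : x r + (p-1)*r ≤ l
      · exact Or.inr hb
      · exact Or.inl ⟨h, by omega⟩
    · rintro (⟨h, _⟩ | h)
      · exact h
      · omega
  · rintro r ⟨_, h1⟩ h2
    simp only [Set.mem_setOf_eq, Bv] at h1 h2
    omega
  · apply Set.Finite.subset (Set.finite_Iic l)
    intro r hr
    simp only [Set.mem_setOf_eq] at hr
    have : r ≤ (p-1) * r := Nat.le_mul_of_pos_left _ (by omega)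
    simp only [Set.mem_Iic]
    omega

end PfAux

namespace PfAux

lemma has_iff (hp2 : 2 ≤ p) (hfm : ∀ m n : ℕ, m ≤ n → f n ≤ f m) :
    HasRemAddLater p f i ↔
      ∃ r s, RemS p (p-1) i (Bv p f) r ∧ AddS p (p-1) i (Bv p f) s ∧ Bv p f r ≤ Bv p f s := by
  constructor
  · rintro ⟨r, c, s, d, hrem, hres, hadd, hres', hramp⟩
    refine ⟨r, s, (remRes_iff hp2 hfm r).1 ⟨c, hrem, hres⟩,
      (addRes_iff hp2 hfm s).1 ⟨d, hadd, hres'⟩, ?_⟩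
    rw [ramp_cast hp2, ramp_cast hp2] at hramp
    have hc : c + 1 = f r := hrem.1
    have hd : d = f s := hadd.1
    simp only [Bv]
    have h1 : (c:ℤ) + ((p-1:ℕ):ℤ) * r < (d:ℤ) + ((p-1:ℕ):ℤ) * s := hramp
    have h2 : ((c:ℤ) + 1) + ((p-1:ℕ):ℤ) * r ≤ (d:ℤ) + ((p-1:ℕ):ℤ) * s := by omega
    have : ((f r : ℤ)) + ((p-1:ℕ):ℤ) * r ≤ ((f s : ℤ)) + ((p-1:ℕ):ℤ) * s := by
      rw [← hd]
      have : ((f r : ℕ) : ℤ) = (c : ℤ) + 1 := by exact_mod_cast congrArg (fun n : ℕ => (n:ℤ)) hc.symm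
      rw [this]
      exact h2
    exact_mod_cast this
  · rintro ⟨r, s, hrem, hadd, hle⟩
    obtain ⟨c, hremc, hresc⟩ := (remRes_iff hp2 hfm r).2 hrem
    obtain ⟨d, haddd, hresd⟩ := (addRes_iff hp2 hfm s).2 hadd
    refine ⟨r, c, s, d, hremc, hresc, haddd, hresd, ?_⟩
    rw [ramp_cast hp2, ramp_cast hp2]
    have hc : c + 1 = f r := hremc.1
    have hd : d = f s := haddd.1
    simp only [Bv] at hle
    have : (f r : ℤ) + ((p-1:ℕ):ℤ) * r ≤ (f s : ℤ) + ((p-1:ℕ):ℤ) * s := by exact_mod_cast hle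
    have hcz : ((c:ℕ):ℤ) + 1 = ((f r : ℕ):ℤ) := by exact_mod_cast congrArg (fun n : ℕ => (n:ℤ)) hc
    have hdz : ((d:ℕ):ℤ) = ((f s:ℕ):ℤ) := by exact_mod_cast congrArg (fun n : ℕ => (n:ℤ)) hd
    omega

end PfAux


/-- The number of normal `i`-nodes of `λ^rest` is at most the number of removable
`i`-nodes of `λ`, with equality iff `λ` does not have both a removable `i`-node and
an addable `i`-node in a strictly later ramp. -/
theorem stmt5 (p : ℕ) (hp : p.Prime) (f : ℕ → ℕ) (hf : IsPartition f) (i : ZMod p)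
    (g : ℕ → ℕ) (hg : IsRest p f g) :
    norCount p g i ≤ remCount p f i ∧
      (norCount p g i = remCount p f i ↔ ¬ HasRemAddLater p f i) := by
  obtain ⟨hfm, Nf, hNf⟩ := hf
  obtain ⟨⟨hgm, Ng, hNg⟩, hgres, hgrmp⟩ := hg
  have hp2 : 2 ≤ p := hp.two_le
  have hq : (p - 1) + 1 = p := by omega
  have hq1 : 1 ≤ p - 1 := by omega
  have hNa : PfAux.Tail (p-1) (PfAux.Bv p f) Nf := by
    intro r hr
    simp only [PfAux.Bv, hNf r hr]
    ring
  have hNb : PfAux.Tail (p-1) (PfAux.Bv p g) Ng := by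
    intro r hr
    simp only [PfAux.Bv, hNg r hr]
    ring
  have hmono : ∀ r s : ℕ, r ≤ s → PfAux.Bv p g r ≤ PfAux.Bv p g s := by
    have hstep : ∀ r, PfAux.Bv p g r ≤ PfAux.Bv p g (r+1) := by
      intro r
      have h1 := hgres r
      simp only [PfAux.Bv]
      have hring : (p-1)*(r+1) = (p-1)*r + (p-1) := by ring
      omega
    intro r s hrs
    exact monotone_nat_of_le_succ hstep hrs
  have hcnt : ∀ l : ℕ, {r | PfAux.Bv p g r ≤ l}.ncard = {r | PfAux.Bv p f r ≤ l}.ncard := by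
    intro l
    have h1 := PfAux.count_from_rmp hp2 f l
    have h2 := PfAux.count_from_rmp hp2 g l
    have h3 := hgrmp (l : ℤ)
    omega
  have hcore := PfAux.core (i := i) hq hq1 (PfAux.Bv p f) (PfAux.Bv p g) hNa hNb hmono hcnt
  have e1 : {r | NormalRow p g i r} = {r | PfAux.NormalS p (p-1) i (PfAux.Bv p g) r} := by
    ext r
    simp only [Set.mem_setOf_eq]
    exact PfAux.normalRow_iff hp2 hgm r
  have e2 : {r | RemRes p f i r} = {r | PfAux.RemS p (p-1) i (PfAux.Bv p f) r} := by
    ext r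
    simp only [Set.mem_setOf_eq]
    exact PfAux.remRes_iff hp2 hfm r
  rw [norCount, remCount, e1, e2, PfAux.has_iff hp2 hfm]
  exact hcore
end

section
/- Let p ≥ 2 and let λ be a partition such that, for some i ∈ ℤ/pℤ, λ has at least one addable i-node and at least one removable i-node. Then at least one of the components λ^{(i−1)} and λ^{(i)} of the p-quotient of λ is non-empty. -/
/-- The set of occupied positions (beads) in the abacus display of the partition `f`:
there is a bead at position `f_j − j` for each `j ≥ 1`. -/
def Occ (f : ℕ → ℕ) : Set ℤ := {x : ℤ | ∃ j : ℕ, x = (f j : ℤ) - ((j : ℤ) + 1)}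

/-- `q_i(λ)`: the position of the first vacant position on runner `i` in the abacus
display of the `p`-core of `λ` (computed via the `charge` of runner `i`, which is
invariant under sliding beads up the runner). -/
noncomputable def qpos (p : ℕ) (f : ℕ → ℕ) (i : ZMod p) : ℤ :=
  (i.val : ℤ) + p *
    ((Set.ncard {x : ℤ | x ∈ Occ f ∧ (x : ZMod p) = i ∧ (i.val : ℤ) ≤ x} : ℤ) -
     (Set.ncard {x : ℤ | x ∉ Occ f ∧ (x : ZMod p) = i ∧ x < (i.val : ℤ)} : ℤ))

/-- The first vacant position on runner `i` of the abacus display of `f`. -/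
noncomputable def firstSpace (p : ℕ) (f : ℕ → ℕ) (i : ZMod p) : ℤ :=
  sInf {x : ℤ | (x : ZMod p) = i ∧ x ∉ Occ f}

/-- The last occupied position on runner `i` of the abacus display of `f`. -/
noncomputable def lastBead (p : ℕ) (f : ℕ → ℕ) (i : ZMod p) : ℤ :=
  sSup {x : ℤ | (x : ZMod p) = i ∧ x ∈ Occ f}

/-- `f` is `p`-quotient-separated: there do not exist runners `i ≠ j` such that the
first space on runner `i` is earlier than the last bead on runner `j` and the first
space on runner `j` is earlier than the last bead on runner `i`. -/
def QSep (p : ℕ) (f : ℕ → ℕ) : Prop :=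
  ¬ ∃ i j : ZMod p, i ≠ j ∧ firstSpace p f i < lastBead p f j ∧
      firstSpace p f j < lastBead p f i

/-- The position of the `(k+1)`-th lowest (i.e. latest) bead on runner `i`. -/
noncomputable def nthBead (p : ℕ) (f : ℕ → ℕ) (i : ZMod p) : ℕ → ℤ
  | 0 => sSup {x : ℤ | x ∈ Occ f ∧ (x : ZMod p) = i}
  | k + 1 => sSup {x : ℤ | x ∈ Occ f ∧ (x : ZMod p) = i ∧ x < nthBead p f i k}

/-- The `p`-quotient component `λ^{(i)}`, as a parts function: its `(k+1)`-th part is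
the number of vacant positions on runner `i` earlier than the `(k+1)`-th lowest bead
on runner `i`. -/
noncomputable def quotFn (p : ℕ) (f : ℕ → ℕ) (i : ZMod p) : ℕ → ℕ :=
  fun k => Set.ncard {x : ℤ | x ∉ Occ f ∧ (x : ZMod p) = i ∧ x < nthBead p f i k}


lemma occ_bddAbove (f : ℕ → ℕ) (hf : IsPartition f) :
    ∀ x ∈ Occ f, x ≤ (f 0 : ℤ) - 1 := by
  rintro x ⟨j, rfl⟩
  have h1 : f j ≤ f 0 := hf.1 0 j (Nat.zero_le _)
  have : (f j : ℤ) ≤ (f 0 : ℤ) := by exact_mod_cast h1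
  have : (0 : ℤ) ≤ (j : ℤ) := Int.natCast_nonneg j
  omega

lemma vac_lb (f : ℕ → ℕ) (N : ℕ) (hN : ∀ n, N ≤ n → f n = 0) :
    ∀ x : ℤ, x ∉ Occ f → -(N : ℤ) ≤ x := by
  intro x hx
  by_contra h
  push_neg at h
  apply hx
  refine ⟨(-(x+1)).toNat, ?_⟩
  have h1 : (0 : ℤ) ≤ -(x+1) := by omega
  have h2 : ((-(x+1)).toNat : ℤ) = -(x+1) := Int.toNat_of_nonneg h1
  have h3 : N ≤ (-(x+1)).toNat := by omega
  rw [hN _ h3]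
  omega

/-- Key lemma: a vacant position below an occupied position on runner `i`
makes `λ^{(i)}` nonempty. -/
lemma quot_ne_zero (p : ℕ) (f : ℕ → ℕ) (hf : IsPartition f) (i : ZMod p)
    (v o : ℤ) (hv : v ∉ Occ f) (hvi : (v : ZMod p) = i)
    (ho : o ∈ Occ f) (hoi : (o : ZMod p) = i) (hvo : v < o) :
    quotFn p f i ≠ (fun _ => 0) := by
  obtain ⟨N, hN⟩ := hf.2
  intro hcontra
  have h0 := congrFun hcontra 0
  set T : Set ℤ := {x : ℤ | x ∈ Occ f ∧ (x : ZMod p) = i} with hT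
  have hTbdd : BddAbove T := ⟨(f 0 : ℤ) - 1, fun x hx => occ_bddAbove f hf x hx.1⟩
  have hoT : o ∈ T := ⟨ho, hoi⟩
  have hle : o ≤ sSup T := le_csSup hTbdd hoT
  have hB : nthBead p f i 0 = sSup T := rfl
  set S : Set ℤ := {x : ℤ | x ∉ Occ f ∧ (x : ZMod p) = i ∧ x < nthBead p f i 0} with hS
  have hvS : v ∈ S := ⟨hv, hvi, by rw [hB]; omega⟩
  have hSsub : S ⊆ Set.Icc (-(N : ℤ)) (sSup T) := by
    rintro x ⟨hx1, _, hx3⟩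
    exact ⟨vac_lb f N hN x hx1, by rw [hB] at hx3; omega⟩
  have hSfin : S.Finite := (Set.finite_Icc _ _).subset hSsub
  have : 0 < S.ncard := (Set.ncard_pos hSfin).mpr ⟨v, hvS⟩
  have : quotFn p f i 0 = S.ncard := rfl
  omega

/-- If `λ` has at least one addable `i`-node and at least one removable `i`-node,
then at least one of the `p`-quotient components `λ^{(i−1)}`, `λ^{(i)}` is non-empty. -/
theorem stmt7 (p : ℕ) (hp : 2 ≤ p) (f : ℕ → ℕ) (hf : IsPartition f) (i : ZMod p)
    (hadd : ∃ r c, Addable f r c ∧ res p r c = i)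
    (hrem : ∃ r c, Removable f r c ∧ res p r c = i) :
    quotFn p f (i - 1) ≠ (fun _ => 0) ∨ quotFn p f i ≠ (fun _ => 0) := by
  obtain ⟨ra, ca, ⟨hca, hdec⟩, hresa⟩ := hadd
  obtain ⟨rr, cr, ⟨hcr, hrr⟩, hresr⟩ := hrem
  -- removable node: a := cr - rr occupied, a - 1 vacant
  set a : ℤ := (cr : ℤ) - (rr : ℤ) with ha
  have haocc : a ∈ Occ f := ⟨rr, by
    rw [ha]
    have h' : (cr : ℤ) + 1 = (f rr : ℤ) := by exact_mod_cast hcr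
    omega⟩
  have havac : a - 1 ∉ Occ f := by
    rintro ⟨j, hj⟩
    have hfr : (cr : ℤ) + 1 = (f rr : ℤ) := by exact_mod_cast hcr
    rcases le_or_gt j rr with h | h
    · have h1 : f rr ≤ f j := hf.1 j rr h
      have h1' : (f rr : ℤ) ≤ (f j : ℤ) := by exact_mod_cast h1
      have h2 : (j : ℤ) ≤ (rr : ℤ) := by exact_mod_cast h
      omega
    · have h1 : f j ≤ f (rr + 1) := hf.1 (rr + 1) j h
      have h1' : (f j : ℤ) ≤ (f (rr+1) : ℤ) := by exact_mod_cast h1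
      have h2 : (f (rr+1) : ℤ) < (f rr : ℤ) := by exact_mod_cast hrr
      have h3 : (rr : ℤ) + 1 ≤ (j : ℤ) := by exact_mod_cast h
      omega
  have hai : (a : ZMod p) = i := by
    rw [← hresr, ha]; unfold res; push_cast; ring
  -- addable node: b := ca - ra vacant, b - 1 occupied
  set b : ℤ := (ca : ℤ) - (ra : ℤ) with hb
  have hbocc : b - 1 ∈ Occ f := ⟨ra, by
    rw [hb]
    have h' : (ca : ℤ) = (f ra : ℤ) := by exact_mod_cast hca
    omega⟩
  have hbvac : b ∉ Occ f := by
    rintro ⟨j, hj⟩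
    have hfr : (ca : ℤ) = (f ra : ℤ) := by exact_mod_cast hca
    rcases le_or_gt ra j with h | h
    · have h1 : f j ≤ f ra := hf.1 ra j h
      have h1' : (f j : ℤ) ≤ (f ra : ℤ) := by exact_mod_cast h1
      have h2 : (ra : ℤ) ≤ (j : ℤ) := by exact_mod_cast h
      omega
    · have hra : ra ≠ 0 := by omega
      rcases hdec with h0 | hlt
      · exact absurd h0 hra
      · have h1 : f (ra - 1) ≤ f j := hf.1 j (ra - 1) (by omega)
        have h1' : (f (ra-1) : ℤ) ≤ (f j : ℤ) := by exact_mod_cast h1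
        have h2 : (f ra : ℤ) < (f (ra-1) : ℤ) := by exact_mod_cast hlt
        have h3 : (j : ℤ) ≤ (ra : ℤ) - 1 := by
          have : (j : ℤ) < (ra : ℤ) := by exact_mod_cast h
          omega
        omega
  have hbi : (b : ZMod p) = i := by
    rw [← hresa, hb]; unfold res; push_cast; ring
  have hab : a ≠ b := fun h => hbvac (h ▸ haocc)
  rcases lt_or_gt_of_ne hab with h | h
  · -- a < b : runner i - 1 has vacant a-1 below occupied b-1
    left
    refine quot_ne_zero p f hf (i - 1) (a - 1) (b - 1) havac ?_ hbocc ?_ (by omega)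
    · push_cast; rw [hai]
    · push_cast; rw [hbi]
  · -- b < a : runner i has vacant b below occupied a
    right
    exact quot_ne_zero p f hf i b a hbvac hbi haocc hai h
end

section
/- Let λ be a partition, i ∈ ℤ/pℤ, and k < l integers. Suppose in the abacus display for λ, positions kp+i−1 and lp+i are occupied while positions kp+i and lp+i−1 are vacant, and the number of beads in positions kp+i+1, …, lp+i−2 is at least l−k. Then λ has a removable i-node and an addable i-node in a strictly later ramp. -/

private lemma bead_strict {f : ℕ → ℕ} (hmono : ∀ m n : ℕ, m ≤ n → f n ≤ f m)
    {m n : ℕ} (h : m < n) : (f n : ℤ) - ((n:ℤ)+1) < (f m : ℤ) - ((m:ℤ)+1) := by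
  have h1 := hmono m n h.le
  have h2 : (f n : ℤ) ≤ f m := by exact_mod_cast h1
  have h3 : (m:ℤ) < n := by exact_mod_cast h
  omega

private lemma bead_lt_iff {f : ℕ → ℕ} (hmono : ∀ m n : ℕ, m ≤ n → f n ≤ f m)
    {m n : ℕ} : (f n : ℤ) - ((n:ℤ)+1) < (f m : ℤ) - ((m:ℤ)+1) ↔ m < n := by
  constructor
  · intro h
    by_contra hc
    push_neg at hc
    rcases eq_or_lt_of_le hc with h' | h'
    · subst h'; omega
    · have := bead_strict hmono h'; omega
  · exact bead_strict hmono

private lemma bead_inj {f : ℕ → ℕ} (hmono : ∀ m n : ℕ, m ≤ n → f n ≤ f m) :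
    Function.Injective (fun j : ℕ => (f j : ℤ) - ((j:ℤ)+1)) := by
  intro a b h
  simp only at h
  by_contra hc
  rcases Nat.lt_or_ge a b with h' | h'
  · have := bead_strict hmono h'; omega
  · rcases eq_or_lt_of_le h' with h'' | h''
    · exact hc h''.symm
    · have := bead_strict hmono h''; omega

/-- If in the abacus display of `λ` positions `kp+i−1` and `lp+i` are occupied while
positions `kp+i` and `lp+i−1` are vacant (`k < l`), and the number of beads in
positions `kp+i+1, …, lp+i−2` is at least `l−k`, then `λ` has a removable `i`-node
and an addable `i`-node in a strictly later ramp. -/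
theorem stmt8 (p : ℕ) (hp : 2 ≤ p) (f : ℕ → ℕ) (hf : IsPartition f)
    (i k l : ℤ) (hkl : k < l)
    (h1 : k * p + i - 1 ∈ Occ f) (h2 : l * p + i ∈ Occ f)
    (h3 : k * p + i ∉ Occ f) (h4 : l * p + i - 1 ∉ Occ f)
    (h5 : l - k ≤ (Set.ncard {x : ℤ | x ∈ Occ f ∧ k * p + i < x ∧ x < l * p + i - 1} : ℤ)) :
    ∃ r c s d, Removable f r c ∧ res p r c = (i : ZMod p) ∧
      Addable f s d ∧ res p s d = (i : ZMod p) ∧ rampOf p r c < rampOf p s d := by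
  obtain ⟨hmono, -⟩ := hf
  have hp' : (2:ℤ) ≤ p := by exact_mod_cast hp
  set L : ℤ := l * p + i with hL
  set K : ℤ := k * p + i with hK
  have hKL : K + p ≤ L := by
    rw [hL, hK]
    have : (k+1) * (p:ℤ) ≤ l * p := by
      apply mul_le_mul_of_nonneg_right (by omega) (by omega)
    linarith
  obtain ⟨r, hr⟩ := h2
  obtain ⟨s, hs⟩ := h1
  have hrs : r < s := by
    apply (bead_lt_iff hmono).mp
    omega
  -- removable node
  have hbr := bead_strict hmono (show r < r + 1 by omega)
  have hner : (f (r+1) : ℤ) - (((r+1:ℕ):ℤ)+1) ≠ L - 1 := fun h => h4 ⟨r+1, h.symm⟩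
  have hfr1 : 1 ≤ f r := by push_cast at hbr hner; omega
  have hR : Removable f r (f r - 1) := by
    constructor
    · omega
    · push_cast at hbr hner; omega
  -- addable node
  have hA : Addable f s (f s) := by
    refine ⟨rfl, ?_⟩
    rcases s with _ | t
    · left; rfl
    · right
      have hbs := bead_strict hmono (show t < t + 1 by omega)
      have hnes : (f t : ℤ) - ((t:ℤ)+1) ≠ K := fun h => h3 ⟨t, h.symm⟩
      simp only [Nat.succ_sub_one]
      push_cast at hbs hs
      omega
  -- counting beads between
  have hset : {x : ℤ | x ∈ Occ f ∧ K < x ∧ x < L - 1}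
      = (fun j : ℕ => (f j:ℤ) - ((j:ℤ)+1)) '' Set.Ioo r s := by
    ext x
    simp only [Set.mem_setOf_eq, Set.mem_image, Set.mem_Ioo, Occ]
    constructor
    · rintro ⟨⟨j, rfl⟩, hx1, hx2⟩
      refine ⟨j, ⟨?_, ?_⟩, rfl⟩
      · exact (bead_lt_iff hmono).mp (by omega)
      · exact (bead_lt_iff hmono).mp (by omega)
    · rintro ⟨j, ⟨hj1, hj2⟩, rfl⟩
      refine ⟨⟨j, rfl⟩, ?_, ?_⟩
      · have hlt := bead_strict hmono hj2
        have hne : (f j : ℤ) - ((j:ℤ)+1) ≠ K := fun h => h3 ⟨j, h.symm⟩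
        omega
      · have hlt := bead_strict hmono hj1
        have hne : (f j : ℤ) - ((j:ℤ)+1) ≠ L - 1 := fun h => h4 ⟨j, h.symm⟩
        omega
  have hcard : Set.ncard {x : ℤ | x ∈ Occ f ∧ K < x ∧ x < L - 1} = s - r - 1 := by
    rw [hset, Set.ncard_image_of_injective _ (bead_inj hmono)]
    rw [show (Set.Ioo r s : Set ℕ) = ↑(Finset.Ioo r s) by simp]
    rw [Set.ncard_coe_finset, Nat.card_Ioo]
  have hcount : l - k ≤ (s:ℤ) - r - 1 := by
    rw [hcard] at h5
    omega
  refine ⟨r, f r - 1, s, f s, hR, ?_, hA, ?_, ?_⟩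
  · show ((f r - 1 : ℕ) : ZMod p) - (r : ZMod p) = (i : ZMod p)
    have h1' : ((f r - 1 : ℕ) : ℤ) - (r:ℤ) = L := by omega
    calc ((f r - 1:ℕ) : ZMod p) - (r : ZMod p)
        = ((((f r - 1:ℕ):ℤ) - (r:ℤ) : ℤ) : ZMod p) := by push_cast; ring
      _ = ((L : ℤ) : ZMod p) := by rw [h1']
      _ = (i : ZMod p) := by rw [hL]; push_cast; simp
  · show ((f s : ℕ) : ZMod p) - (s : ZMod p) = (i : ZMod p)
    have h2' : ((f s : ℕ) : ℤ) - (s:ℤ) = K := by omega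
    calc ((f s:ℕ) : ZMod p) - (s : ZMod p)
        = ((((f s:ℕ):ℤ) - (s:ℤ) : ℤ) : ZMod p) := by push_cast; ring
      _ = ((K : ℤ) : ZMod p) := by rw [h2']
      _ = (i : ZMod p) := by rw [hK]; push_cast; simp
  · show ((f r - 1 : ℕ) : ℤ) + ((p:ℤ) - 1) * r < ((f s : ℕ) : ℤ) + ((p:ℤ) - 1) * s
    have hc1 : ((f r - 1:ℕ):ℤ) = (f r:ℤ) - 1 := by omega
    have hstep : (p:ℤ) * (l + r) + p ≤ p * (k + s) := by
      have h0 : (0:ℤ) ≤ p := by linarith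
      have := mul_le_mul_of_nonneg_left (show l + r + 1 ≤ k + s by omega) h0
      linarith
    rw [hc1]
    have hfr' : (f r : ℤ) = L + r + 1 := by omega
    have hfs' : (f s : ℤ) = K + s := by omega
    rw [hfr', hfs', hL, hK]
    linarith
end

section
/- Suppose λ is a p-quotient-separated partition and i, j are runners with q_i(λ) < q_j(λ). Then in the abacus display for λ, the first vacant position on runner j is later than the last occupied position on runner i. -/
namespace Stmt9Aux

def BeadsGE (p : ℕ) (f : ℕ → ℕ) (r : ZMod p) (t : ℤ) : Set ℤ :=
  {x : ℤ | x ∈ Occ f ∧ (x : ZMod p) = r ∧ t ≤ x}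

def SpacesLT (p : ℕ) (f : ℕ → ℕ) (r : ZMod p) (t : ℤ) : Set ℤ :=
  {x : ℤ | x ∉ Occ f ∧ (x : ZMod p) = r ∧ x < t}

noncomputable def chargeAt (p : ℕ) (f : ℕ → ℕ) (r : ZMod p) (t : ℤ) : ℤ :=
  ((BeadsGE p f r t).ncard : ℤ) - ((SpacesLT p f r t).ncard : ℤ)

variable {p : ℕ} {f : ℕ → ℕ}

lemma occ_le (hdec : ∀ m n : ℕ, m ≤ n → f n ≤ f m) {x : ℤ} (hx : x ∈ Occ f) :
    x ≤ (f 0 : ℤ) - 1 := by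
  obtain ⟨j, rfl⟩ := hx
  have := hdec 0 j (Nat.zero_le j)
  have hj : (0:ℤ) ≤ j := Int.natCast_nonneg j
  have : (f j : ℤ) ≤ (f 0 : ℤ) := by exact_mod_cast this
  linarith

lemma mem_occ_of_le {N : ℕ} (hN : ∀ n, N ≤ n → f n = 0) {x : ℤ}
    (hx : x ≤ -((N:ℤ) + 1)) : x ∈ Occ f := by
  refine ⟨(-x - 1).toNat, ?_⟩
  have h1 : (N:ℤ) ≤ -x - 1 := by linarith
  have h0 : (0:ℤ) ≤ -x - 1 := le_trans (Int.natCast_nonneg N) h1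
  have h2 : (((-x - 1).toNat : ℕ) : ℤ) = -x - 1 := Int.toNat_of_nonneg h0
  have h3 : N ≤ (-x - 1).toNat := by omega
  rw [hN _ h3]
  omega

lemma finite_beadsGE (hdec : ∀ m n : ℕ, m ≤ n → f n ≤ f m) (r : ZMod p) (t : ℤ) :
    (BeadsGE p f r t).Finite := by
  apply Set.Finite.subset (Set.finite_Icc t ((f 0 : ℤ) - 1))
  rintro x ⟨hx1, _, hx3⟩
  exact ⟨hx3, occ_le hdec hx1⟩

lemma finite_spacesLT {N : ℕ} (hN : ∀ n, N ≤ n → f n = 0) (r : ZMod p) (t : ℤ) :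
    (SpacesLT p f r t).Finite := by
  apply Set.Finite.subset (Set.finite_Icc (-((N:ℤ) + 1)) t)
  rintro x ⟨hx1, _, hx3⟩
  refine ⟨?_, le_of_lt hx3⟩
  by_contra h
  push_neg at h
  exact hx1 (mem_occ_of_le hN (le_of_lt h))

lemma eq_of_same_runner (hp : 0 < p) {x y : ℤ} (h : (x : ZMod p) = (y : ZMod p))
    (h1 : y ≤ x) (h2 : x < y + p) : x = y := by
  have hd : (p:ℤ) ∣ x - y := by
    have := (ZMod.intCast_eq_intCast_iff' x y p).mp h
    exact Int.ModEq.dvd this.symm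
  obtain ⟨k, hk⟩ := hd
  have hp' : (0:ℤ) < p := by exact_mod_cast hp
  have hk0 : k = 0 := by nlinarith
  rw [hk0, mul_zero] at hk
  omega

lemma beads_step_mem (hdec : ∀ m n : ℕ, m ≤ n → f n ≤ f m) (hp : 0 < p)
    {r : ZMod p} {t : ℤ} (ht : (t : ZMod p) = r) (h : t ∈ Occ f) :
    (BeadsGE p f r t).ncard = (BeadsGE p f r (t + p)).ncard + 1 := by
  have hp' : (0:ℤ) < p := by exact_mod_cast hp
  have hset : BeadsGE p f r t = insert t (BeadsGE p f r (t + p)) := by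
    ext x
    constructor
    · rintro ⟨hx1, hx2, hx3⟩
      by_cases hlt : x < t + p
      · left; exact eq_of_same_runner hp (hx2.trans ht.symm) hx3 hlt
      · right; exact ⟨hx1, hx2, le_of_not_gt hlt⟩
    · rintro (rfl | ⟨hx1, hx2, hx3⟩)
      · exact ⟨h, ht, le_refl _⟩
      · exact ⟨hx1, hx2, by linarith⟩
  have hnm : t ∉ BeadsGE p f r (t + p) := by
    rintro ⟨_, _, h3⟩; linarith
  rw [hset, Set.ncard_insert_of_notMem hnm (finite_beadsGE hdec r (t + p))]

lemma beads_step_not (hp : 0 < p)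
    {r : ZMod p} {t : ℤ} (ht : (t : ZMod p) = r) (h : t ∉ Occ f) :
    (BeadsGE p f r t).ncard = (BeadsGE p f r (t + p)).ncard := by
  have hp' : (0:ℤ) < p := by exact_mod_cast hp
  have hset : BeadsGE p f r t = BeadsGE p f r (t + p) := by
    ext x
    constructor
    · rintro ⟨hx1, hx2, hx3⟩
      refine ⟨hx1, hx2, ?_⟩
      by_contra hlt
      push_neg at hlt
      exact h ((eq_of_same_runner hp (hx2.trans ht.symm) hx3 hlt) ▸ hx1)
    · rintro ⟨hx1, hx2, hx3⟩
      exact ⟨hx1, hx2, by linarith⟩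
  rw [hset]

lemma spaces_step_mem (hp : 0 < p)
    {r : ZMod p} {t : ℤ} (ht : (t : ZMod p) = r) (h : t ∈ Occ f) :
    (SpacesLT p f r (t + p)).ncard = (SpacesLT p f r t).ncard := by
  have hp' : (0:ℤ) < p := by exact_mod_cast hp
  have hset : SpacesLT p f r (t + p) = SpacesLT p f r t := by
    ext x
    constructor
    · rintro ⟨hx1, hx2, hx3⟩
      refine ⟨hx1, hx2, ?_⟩
      by_contra hge
      push_neg at hge
      exact hx1 ((eq_of_same_runner hp (hx2.trans ht.symm) hge hx3) ▸ h)
    · rintro ⟨hx1, hx2, hx3⟩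
      exact ⟨hx1, hx2, by linarith⟩
  rw [hset]

lemma spaces_step_not {N : ℕ} (hN : ∀ n, N ≤ n → f n = 0) (hp : 0 < p)
    {r : ZMod p} {t : ℤ} (ht : (t : ZMod p) = r) (h : t ∉ Occ f) :
    (SpacesLT p f r (t + p)).ncard = (SpacesLT p f r t).ncard + 1 := by
  have hp' : (0:ℤ) < p := by exact_mod_cast hp
  have hset : SpacesLT p f r (t + p) = insert t (SpacesLT p f r t) := by
    ext x
    constructor
    · rintro ⟨hx1, hx2, hx3⟩
      by_cases hge : t ≤ x
      · left; exact eq_of_same_runner hp (hx2.trans ht.symm) hge hx3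
      · right; exact ⟨hx1, hx2, lt_of_not_ge hge⟩
    · rintro (rfl | ⟨hx1, hx2, hx3⟩)
      · exact ⟨h, ht, by linarith⟩
      · exact ⟨hx1, hx2, by linarith⟩
  have hnm : t ∉ SpacesLT p f r t := by
    rintro ⟨_, _, h3⟩; exact lt_irrefl _ h3
  rw [hset, Set.ncard_insert_of_notMem hnm (finite_spacesLT hN r t)]

lemma charge_step (hf : IsPartition f) (hp : 0 < p)
    {r : ZMod p} {t : ℤ} (ht : (t : ZMod p) = r) :
    chargeAt p f r (t + p) = chargeAt p f r t - 1 := by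
  obtain ⟨hdec, N, hN⟩ := hf
  unfold chargeAt
  by_cases h : t ∈ Occ f
  · have hb := beads_step_mem (f := f) hdec hp ht h
    have hs := spaces_step_mem (f := f) hp ht h
    omega
  · have hb := beads_step_not (f := f) hp ht h
    have hs := spaces_step_not (f := f) hN hp ht h
    omega

lemma res_shift [NeZero p] (i : ZMod p) (m : ℤ) :
    (((i.val : ℤ) + (p : ℤ) * m : ℤ) : ZMod p) = i := by
  push_cast
  simp [ZMod.natCast_val, ZMod.cast_id, ZMod.natCast_self]

lemma qpos_def (i : ZMod p) :
    qpos p f i = (i.val : ℤ) + p * chargeAt p f i (i.val : ℤ) := rfl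

lemma qpos_eq [NeZero p] (hf : IsPartition f) (hp : 0 < p) (i : ZMod p) {t : ℤ}
    (ht : (t : ZMod p) = i) : qpos p f i = t + p * chargeAt p f i t := by
  have key : ∀ m : ℤ, qpos p f i
      = ((i.val : ℤ) + p * m) + p * chargeAt p f i ((i.val : ℤ) + p * m) := by
    intro m
    induction m using Int.induction_on with
    | zero => rw [show (i.val : ℤ) + (p : ℤ) * 0 = (i.val : ℤ) by ring]; rfl
    | succ n ih =>
        have hc := charge_step hf hp (res_shift i (n : ℤ))
        rw [show (i.val : ℤ) + (p : ℤ) * ((n : ℤ) + 1) = ((i.val : ℤ) + p * (n : ℤ)) + p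
          by ring, hc]
        linear_combination ih
    | pred n ih =>
        have hc := charge_step hf hp (res_shift i (-(n : ℤ) - 1))
        rw [show (i.val : ℤ) + (p : ℤ) * (-(n : ℤ)) = ((i.val : ℤ) + p * (-(n : ℤ) - 1)) + p
          by ring] at ih
        rw [hc] at ih
        linear_combination ih
  have hd : (p : ℤ) ∣ t - (i.val : ℤ) := by
    have h2 : (((i.val : ℤ)) : ZMod p) = i := by
      push_cast; simp [ZMod.natCast_val, ZMod.cast_id]
    have h3 := (ZMod.intCast_eq_intCast_iff' t (i.val : ℤ) p).mp (by rw [ht, h2])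
    exact Int.ModEq.dvd h3.symm
  obtain ⟨m, hm⟩ := hd
  have h4 : t = (i.val : ℤ) + p * m := by linarith
  rw [h4]
  exact key m

lemma firstSpace_spec [NeZero p] (hf : IsPartition f) (hp : 0 < p) (i : ZMod p) :
    ((firstSpace p f i : ZMod p) = i ∧ firstSpace p f i ∉ Occ f)
    ∧ ∀ x : ℤ, (x : ZMod p) = i → x ∉ Occ f → firstSpace p f i ≤ x := by
  obtain ⟨hdec, N, hN⟩ := hf
  have hne : {x : ℤ | (x : ZMod p) = i ∧ x ∉ Occ f}.Nonempty := by
    refine ⟨(i.val : ℤ) + p * ((f 0 : ℤ) + 1), res_shift i _, fun hmem => ?_⟩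
    have h1 := occ_le hdec hmem
    have h2 : (1 : ℤ) ≤ p := by exact_mod_cast hp
    have h3 : (0 : ℤ) ≤ (f 0 : ℤ) := Int.natCast_nonneg _
    have h4 : (0 : ℤ) ≤ (i.val : ℤ) := Int.natCast_nonneg _
    nlinarith
  have hbdd : BddBelow {x : ℤ | (x : ZMod p) = i ∧ x ∉ Occ f} := by
    refine ⟨-((N : ℤ) + 1), fun x hx => ?_⟩
    by_contra h
    push_neg at h
    exact hx.2 (mem_occ_of_le hN (le_of_lt h))
  exact ⟨Int.csInf_mem hne hbdd, fun x h1 h2 => csInf_le hbdd ⟨h1, h2⟩⟩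

lemma lastBead_spec [NeZero p] (hf : IsPartition f) (hp : 0 < p) (i : ZMod p) :
    ((lastBead p f i : ZMod p) = i ∧ lastBead p f i ∈ Occ f)
    ∧ ∀ x : ℤ, (x : ZMod p) = i → x ∈ Occ f → x ≤ lastBead p f i := by
  obtain ⟨hdec, N, hN⟩ := hf
  have hne : {x : ℤ | (x : ZMod p) = i ∧ x ∈ Occ f}.Nonempty := by
    refine ⟨(i.val : ℤ) + p * (-(N : ℤ) - 1), res_shift i _, mem_occ_of_le hN ?_⟩
    have h2 : (1 : ℤ) ≤ p := by exact_mod_cast hp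
    have h3 : (0 : ℤ) ≤ (N : ℤ) := Int.natCast_nonneg _
    have h4 : (i.val : ℤ) ≤ (p : ℤ) - 1 := by
      have := ZMod.val_lt i
      have : (i.val : ℤ) < (p : ℤ) := by exact_mod_cast this
      linarith
    nlinarith [mul_nonneg (by linarith : (0:ℤ) ≤ (p:ℤ) - 1) h3]
  have hbdd : BddAbove {x : ℤ | (x : ZMod p) = i ∧ x ∈ Occ f} := by
    refine ⟨(f 0 : ℤ), fun x hx => ?_⟩
    have := occ_le hdec hx.2
    linarith
  exact ⟨Int.csSup_mem hne hbdd, fun x h1 h2 => le_csSup hbdd ⟨h1, h2⟩⟩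

end Stmt9Aux

open Stmt9Aux in
/-- If `λ` is `p`-quotient-separated and `q_i(λ) < q_j(λ)`, then the first vacant
position on runner `j` is later than the last occupied position on runner `i`. -/
theorem stmt9 (p : ℕ) (hp : 2 ≤ p) (f : ℕ → ℕ) (hf : IsPartition f)
    (hqs : QSep p f) (i j : ZMod p) (hij : qpos p f i < qpos p f j) :
    lastBead p f i < firstSpace p f j := by
  haveI : NeZero p := ⟨by omega⟩
  have hp0 : 0 < p := by omega
  have hpz : (0 : ℤ) < (p : ℤ) := by exact_mod_cast hp0
  obtain ⟨hFSi, hFSi_le⟩ := firstSpace_spec hf hp0 i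
  obtain ⟨hFSj, hFSj_le⟩ := firstSpace_spec hf hp0 j
  obtain ⟨hLBi, hLBi_ge⟩ := lastBead_spec hf hp0 i
  obtain ⟨hLBj, hLBj_ge⟩ := lastBead_spec hf hp0 j
  have hij' : i ≠ j := fun h => absurd hij (by rw [h]; exact lt_irrefl _)
  by_contra hcon
  push_neg at hcon
  have h1 : firstSpace p f j < lastBead p f i := by
    refine lt_of_le_of_ne hcon (fun h => hij' ?_)
    rw [← hLBi.1, ← h, hFSj.1]
  have h2 : lastBead p f j < firstSpace p f i := by
    have hne : firstSpace p f i ≠ lastBead p f j := fun h => hij' (by rw [← hFSi.1, h, hLBj.1])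
    by_contra h
    push_neg at h
    exact hqs ⟨i, j, hij', lt_of_le_of_ne h hne, h1⟩
  set t := firstSpace p f i with hT
  have hqi : qpos p f i = t + p * chargeAt p f i t := qpos_eq hf hp0 i hFSi.1
  have hVi : (SpacesLT p f i t).ncard = 0 := by
    have he : SpacesLT p f i t = ∅ := by
      rw [Set.eq_empty_iff_forall_notMem]
      rintro x ⟨hx1, hx2, hx3⟩
      exact absurd (hFSi_le x hx2 hx1) (not_le.mpr hx3)
    simp [he]
  have hBnn : (0 : ℤ) ≤ ((BeadsGE p f i t).ncard : ℤ) := Int.natCast_nonneg _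
  have hqi' : qpos p f i = t + p * ((BeadsGE p f i t).ncard : ℤ) := by
    rw [hqi]; unfold chargeAt; rw [hVi]; push_cast; ring
  set u := lastBead p f j + (p : ℤ) with hU
  have huj : (u : ZMod p) = j := by
    rw [hU]
    push_cast
    simp [hLBj.1, ZMod.natCast_self]
  have hqj : qpos p f j = u + p * chargeAt p f j u := qpos_eq hf hp0 j huj
  have hAj : (BeadsGE p f j u).ncard = 0 := by
    have he : BeadsGE p f j u = ∅ := by
      rw [Set.eq_empty_iff_forall_notMem]
      rintro x ⟨hx1, hx2, hx3⟩
      have := hLBj_ge x hx2 hx1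
      rw [hU] at hx3
      linarith
    simp [he]
  have hqj' : qpos p f j = u - p * ((SpacesLT p f j u).ncard : ℤ) := by
    rw [hqj]; unfold chargeAt; rw [hAj]; push_cast; ring
  have hVjnn : (0 : ℤ) ≤ ((SpacesLT p f j u).ncard : ℤ) := Int.natCast_nonneg _
  have hqi_ge : t ≤ qpos p f i := by nlinarith
  have hfs_ne : firstSpace p f j ≠ t := by
    intro h
    have : j = i := by rw [← hFSj.1, h, hFSi.1]
    exact hij' this.symm
  rcases lt_or_gt_of_ne hfs_ne with hlt | hgt
  · rcases Nat.eq_zero_or_pos (SpacesLT p f j u).ncard with hV | hV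
    · have hge : u ≤ firstSpace p f j := by
        obtain ⟨hdec, N, hN⟩ := hf
        have he : SpacesLT p f j u = ∅ :=
          (Set.ncard_eq_zero (finite_spacesLT hN j u)).mp hV
        by_contra h
        push_neg at h
        have hx : firstSpace p f j ∈ SpacesLT p f j u := ⟨hFSj.2, hFSj.1, h⟩
        rw [he] at hx
        exact hx
      have hV' : (p : ℤ) * ((SpacesLT p f j u).ncard : ℤ) = 0 := by
        have : ((SpacesLT p f j u).ncard : ℤ) = 0 := by exact_mod_cast hV
        rw [this]; ring
      rw [hqj'] at hij
      linarith
    · have h1V : (1 : ℤ) ≤ ((SpacesLT p f j u).ncard : ℤ) := by exact_mod_cast hV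
      have hpV : (p : ℤ) * 1 ≤ p * ((SpacesLT p f j u).ncard : ℤ) :=
        mul_le_mul_of_nonneg_left h1V (le_of_lt hpz)
      rw [hqj'] at hij
      linarith
  · have hmem : lastBead p f i ∈ BeadsGE p f i t := ⟨hLBi.2, hLBi.1, by linarith⟩
    have hB1 : 0 < (BeadsGE p f i t).ncard := by
      obtain ⟨hdec, N, hN⟩ := hf
      exact (Set.ncard_pos (finite_beadsGE hdec i t)).mpr ⟨_, hmem⟩
    have hB1' : (1 : ℤ) ≤ ((BeadsGE p f i t).ncard : ℤ) := by exact_mod_cast hB1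
    have hpB : (p : ℤ) * 1 ≤ p * ((BeadsGE p f i t).ncard : ℤ) :=
      mul_le_mul_of_nonneg_left hB1' (le_of_lt hpz)
    have hpVnn : 0 ≤ (p : ℤ) * ((SpacesLT p f j u).ncard : ℤ) :=
      mul_nonneg (le_of_lt hpz) hVjnn
    rw [hqj'] at hij
    linarith
end

section
/- If λ is a p-quotient-separated partition and λ has at least two addable i-nodes for some i ∈ ℤ/pℤ, then q_{i−1}(λ) > q_i(λ). -/
namespace Stmt10Aux

/-- Beads on runner `i` at positions `≥ T`. -/
def Bset (p : ℕ) (f : ℕ → ℕ) (i : ZMod p) (T : ℤ) : Set ℤ :=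
  {x : ℤ | x ∈ Occ f ∧ (x : ZMod p) = i ∧ T ≤ x}

/-- Spaces on runner `i` at positions `< T`. -/
def Sset (p : ℕ) (f : ℕ → ℕ) (i : ZMod p) (T : ℤ) : Set ℤ :=
  {x : ℤ | x ∉ Occ f ∧ (x : ZMod p) = i ∧ x < T}

noncomputable def gg (p : ℕ) (f : ℕ → ℕ) (i : ZMod p) (T : ℤ) : ℤ :=
  ((Bset p f i T).ncard : ℤ) - ((Sset p f i T).ncard : ℤ)

lemma qpos_def (p : ℕ) (f : ℕ → ℕ) (i : ZMod p) :
    qpos p f i = (i.val : ℤ) + p * gg p f i (i.val : ℤ) := rfl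

lemma occ_le {f : ℕ → ℕ} (hf : IsPartition f) {x : ℤ} (hx : x ∈ Occ f) :
    x ≤ (f 0 : ℤ) - 1 := by
  obtain ⟨j, rfl⟩ := hx
  have := hf.1 0 j (Nat.zero_le j)
  omega

lemma occ_of_le {f : ℕ → ℕ} (hf : IsPartition f) :
    ∃ M : ℤ, ∀ x : ℤ, x ≤ M → x ∈ Occ f := by
  obtain ⟨N, hN⟩ := hf.2
  refine ⟨-(N : ℤ) - 1, fun x hx => ?_⟩
  refine ⟨(-x - 1).toNat, ?_⟩
  have h1 : ((-x - 1).toNat : ℤ) = -x - 1 := Int.toNat_of_nonneg (by omega)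
  have h2 : f (-x - 1).toNat = 0 := hN _ (by omega)
  rw [h2]
  push_cast
  omega

lemma Bset_finite {p : ℕ} {f : ℕ → ℕ} (hf : IsPartition f) (i : ZMod p) (T : ℤ) :
    (Bset p f i T).Finite := by
  apply (Set.finite_Icc T ((f 0 : ℤ) - 1)).subset
  rintro x ⟨hx, _, hT⟩
  exact ⟨hT, occ_le hf hx⟩

lemma Sset_finite {p : ℕ} {f : ℕ → ℕ} (hf : IsPartition f) (i : ZMod p) (T : ℤ) :
    (Sset p f i T).Finite := by
  obtain ⟨M, hM⟩ := occ_of_le hf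
  apply (Set.finite_Icc (M + 1) T).subset
  rintro x ⟨hx, _, hT⟩
  have : ¬ x ≤ M := fun h => hx (hM x h)
  exact ⟨by omega, le_of_lt hT⟩

lemma dvd_of_runner {p : ℕ} {i : ZMod p} {x T : ℤ}
    (hx : (x : ZMod p) = i) (hT : (T : ZMod p) = i) : (p : ℤ) ∣ x - T := by
  have : (x : ZMod p) = (T : ZMod p) := by rw [hx, hT]
  have h2 : x ≡ T [ZMOD p] := (ZMod.intCast_eq_intCast_iff _ _ _).mp this
  exact h2.symm.dvd

lemma dichotomy {p : ℕ} (hp : 0 < p) {x T : ℤ} (h : (p : ℤ) ∣ x - T) (hle : T ≤ x) :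
    x = T ∨ T + p ≤ x := by
  obtain ⟨k, hk⟩ := h
  have hp' : (0 : ℤ) < p := by exact_mod_cast hp
  have hk0 : 0 ≤ k := by nlinarith
  rcases eq_or_lt_of_le hk0 with h0 | h0
  · left
    have : x - T = 0 := by rw [hk, ← h0, mul_zero]
    omega
  · right; nlinarith

lemma gg_step {p : ℕ} (hp : 0 < p) {f : ℕ → ℕ} (hf : IsPartition f) (i : ZMod p)
    {T : ℤ} (hT : (T : ZMod p) = i) :
    gg p f i (T + p) = gg p f i T - 1 := by
  by_cases hocc : T ∈ Occ f
  · have hB : Bset p f i T = insert T (Bset p f i (T + p)) := by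
      ext x
      simp only [Bset, Set.mem_setOf_eq, Set.mem_insert_iff]
      constructor
      · rintro ⟨h1, h2, h3⟩
        rcases dichotomy hp (dvd_of_runner h2 hT) h3 with h | h
        · exact Or.inl h
        · exact Or.inr ⟨h1, h2, h⟩
      · rintro (rfl | ⟨h1, h2, h3⟩)
        · exact ⟨hocc, hT, le_refl _⟩
        · have hp' : (0 : ℤ) < p := by exact_mod_cast hp
          exact ⟨h1, h2, by omega⟩
    have hS : Sset p f i (T + p) = Sset p f i T := by
      ext x
      simp only [Sset, Set.mem_setOf_eq]
      constructor
      · rintro ⟨h1, h2, h3⟩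
        refine ⟨h1, h2, ?_⟩
        by_contra hc
        push_neg at hc
        rcases dichotomy hp (dvd_of_runner h2 hT) hc with h | h
        · exact h1 (h ▸ hocc)
        · omega
      · rintro ⟨h1, h2, h3⟩
        have hp' : (0 : ℤ) < p := by exact_mod_cast hp
        exact ⟨h1, h2, by omega⟩
    have hTn : T ∉ Bset p f i (T + p) := by
      rintro ⟨-, -, h⟩
      have hp' : (0 : ℤ) < p := by exact_mod_cast hp
      omega
    have hcard : (Bset p f i T).ncard = (Bset p f i (T + p)).ncard + 1 := by
      rw [hB]; exact Set.ncard_insert_of_notMem hTn (Bset_finite hf i _)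
    unfold gg
    rw [hS, hcard]
    push_cast
    ring
  · have hB : Bset p f i T = Bset p f i (T + p) := by
      ext x
      simp only [Bset, Set.mem_setOf_eq]
      constructor
      · rintro ⟨h1, h2, h3⟩
        rcases dichotomy hp (dvd_of_runner h2 hT) h3 with h | h
        · exact absurd (h ▸ h1) hocc
        · exact ⟨h1, h2, h⟩
      · rintro ⟨h1, h2, h3⟩
        have hp' : (0 : ℤ) < p := by exact_mod_cast hp
        exact ⟨h1, h2, by omega⟩
    have hS : Sset p f i (T + p) = insert T (Sset p f i T) := by
      ext x
      simp only [Sset, Set.mem_setOf_eq, Set.mem_insert_iff]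
      constructor
      · rintro ⟨h1, h2, h3⟩
        by_cases hx : x = T
        · exact Or.inl hx
        · refine Or.inr ⟨h1, h2, ?_⟩
          by_contra hc
          push_neg at hc
          rcases dichotomy hp (dvd_of_runner h2 hT) hc with h | h
          · exact hx h
          · omega
      · rintro (rfl | ⟨h1, h2, h3⟩)
        · have hp' : (0 : ℤ) < p := by exact_mod_cast hp
          exact ⟨hocc, hT, by omega⟩
        · have hp' : (0 : ℤ) < p := by exact_mod_cast hp
          exact ⟨h1, h2, by omega⟩
    have hTn : T ∉ Sset p f i T := by
      rintro ⟨-, -, h⟩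
      omega
    have hcard : (Sset p f i (T + p)).ncard = (Sset p f i T).ncard + 1 := by
      rw [hS]; exact Set.ncard_insert_of_notMem hTn (Sset_finite hf i _)
    unfold gg
    rw [hB, hcard]
    push_cast
    ring

lemma cast_add_p {p : ℕ} {i : ZMod p} {T : ℤ} (hT : (T : ZMod p) = i) (n : ℕ) :
    ((T + n * p : ℤ) : ZMod p) = i := by
  push_cast
  simp [hT, ZMod.natCast_self]

lemma gg_shift {p : ℕ} (hp : 0 < p) {f : ℕ → ℕ} (hf : IsPartition f) (i : ZMod p)
    {T : ℤ} (hT : (T : ZMod p) = i) (n : ℕ) :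
    gg p f i (T + n * p) = gg p f i T - n := by
  induction n with
  | zero => simp
  | succ m ih =>
    have h1 : T + ((m : ℤ) + 1) * p = (T + m * p) + p := by ring
    push_cast
    rw [h1, gg_step hp hf i (cast_add_p hT m), ih]
    push_cast
    ring

lemma inv_aux {p : ℕ} (hp : 0 < p) {f : ℕ → ℕ} (hf : IsPartition f) (i : ZMod p)
    {S T : ℤ} (hS : (S : ZMod p) = i) (hT : (T : ZMod p) = i) (hle : S ≤ T) :
    S + p * gg p f i S = T + p * gg p f i T := by
  obtain ⟨k, hk⟩ := dvd_of_runner hT hS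
  have hp' : (0 : ℤ) < p := by exact_mod_cast hp
  have hk0 : 0 ≤ k := by nlinarith
  have hT' : T = S + k.toNat * p := by
    rw [Int.toNat_of_nonneg hk0, mul_comm]
    omega
  rw [hT', gg_shift hp hf i hS k.toNat, Int.toNat_of_nonneg hk0]
  ring

lemma val_cast {p : ℕ} [NeZero p] (j : ZMod p) : ((j.val : ℤ) : ZMod p) = j := by
  push_cast
  simp [ZMod.natCast_val, ZMod.cast_id]

lemma qpos_eq {p : ℕ} (hp : 0 < p) {f : ℕ → ℕ} (hf : IsPartition f) (i : ZMod p)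
    {T : ℤ} (hT : (T : ZMod p) = i) :
    qpos p f i = T + p * gg p f i T := by
  rw [qpos_def]
  haveI : NeZero p := ⟨Nat.pos_iff_ne_zero.mp hp⟩
  have hvi : (((i.val : ℤ)) : ZMod p) = i := val_cast i
  rcases le_total ((i.val : ℤ)) T with h | h
  · exact inv_aux hp hf i hvi hT h
  · exact (inv_aux hp hf i hT hvi h).symm

lemma qpos_cast {p : ℕ} (hp : 0 < p) (f : ℕ → ℕ) (i : ZMod p) :
    ((qpos p f i : ℤ) : ZMod p) = i := by
  haveI : NeZero p := ⟨Nat.pos_iff_ne_zero.mp hp⟩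
  rw [qpos_def]
  push_cast
  simp [ZMod.natCast_self, val_cast]

lemma qpos_ne {p : ℕ} (hp : 2 ≤ p) (f : ℕ → ℕ) (i : ZMod p) :
    qpos p f i ≠ qpos p f (i - 1) := by
  intro h
  haveI : Fact (1 < p) := ⟨hp⟩
  have h2 := congrArg (fun z : ℤ => (z : ZMod p)) h
  simp only [qpos_cast (by omega : 0 < p)] at h2
  exact one_ne_zero (sub_eq_self.mp h2.symm)

lemma bead_bddAbove {p : ℕ} {f : ℕ → ℕ} (hf : IsPartition f) (j : ZMod p) :
    BddAbove {x : ℤ | (x : ZMod p) = j ∧ x ∈ Occ f} :=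
  ⟨(f 0 : ℤ) - 1, fun _ hx => occ_le hf hx.2⟩

lemma bead_nonempty {p : ℕ} (hp : 0 < p) {f : ℕ → ℕ} (hf : IsPartition f) (j : ZMod p) :
    {x : ℤ | (x : ZMod p) = j ∧ x ∈ Occ f}.Nonempty := by
  haveI : NeZero p := ⟨Nat.pos_iff_ne_zero.mp hp⟩
  obtain ⟨M, hM⟩ := occ_of_le hf
  set n : ℕ := ((j.val : ℤ) - M).toNat with hn
  refine ⟨(j.val : ℤ) - p * n, ?_, hM _ ?_⟩
  · push_cast
    simp [ZMod.natCast_self, val_cast]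
  · have h1 : ((j.val : ℤ) - M) ≤ (n : ℤ) := Int.self_le_toNat _
    have h2 : (n : ℤ) ≤ (p : ℤ) * n :=
      le_mul_of_one_le_left (Int.natCast_nonneg n) (by exact_mod_cast hp)
    linarith

lemma space_bddBelow {p : ℕ} {f : ℕ → ℕ} (hf : IsPartition f) (j : ZMod p) :
    BddBelow {x : ℤ | (x : ZMod p) = j ∧ x ∉ Occ f} := by
  obtain ⟨M, hM⟩ := occ_of_le hf
  refine ⟨M + 1, fun x hx => ?_⟩
  by_contra hc
  push_neg at hc
  exact hx.2 (hM x (by omega))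

lemma space_nonempty {p : ℕ} (hp : 0 < p) {f : ℕ → ℕ} (hf : IsPartition f) (j : ZMod p) :
    {x : ℤ | (x : ZMod p) = j ∧ x ∉ Occ f}.Nonempty := by
  haveI : NeZero p := ⟨Nat.pos_iff_ne_zero.mp hp⟩
  refine ⟨(j.val : ℤ) + p * (f 0), ?_, ?_⟩
  · push_cast
    simp [ZMod.natCast_self, val_cast]
  · intro h
    have h1 := occ_le hf h
    have h2 : (f 0 : ℤ) ≤ (p : ℤ) * (f 0) :=
      le_mul_of_one_le_left (Int.natCast_nonneg _) (by exact_mod_cast hp)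
    have h3 : (0 : ℤ) ≤ (j.val : ℤ) := Int.natCast_nonneg _
    linarith

lemma key {p : ℕ} (hp : 2 ≤ p) {f : ℕ → ℕ} (hf : IsPartition f) (hqs : QSep p f)
    (i : ZMod p) {y₁ y₂ : ℤ}
    (h1o : y₁ ∈ Occ f) (h1s : y₁ + 1 ∉ Occ f) (h1r : ((y₁ + 1 : ℤ) : ZMod p) = i)
    (h2o : y₂ ∈ Occ f) (h2s : y₂ + 1 ∉ Occ f) (h2r : ((y₂ + 1 : ℤ) : ZMod p) = i)
    (hlt : y₁ < y₂) : qpos p f i < qpos p f (i - 1) := by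
  have hp0 : 0 < p := by omega
  have hp' : (2 : ℤ) ≤ p := by exact_mod_cast hp
  have hine : i ≠ i - 1 := by
    intro h
    haveI : Fact (1 < p) := ⟨hp⟩
    exact one_ne_zero (sub_eq_self.mp h.symm)
  have h1r' : ((y₁ : ℤ) : ZMod p) = i - 1 := by
    push_cast at h1r
    exact eq_sub_iff_add_eq.mpr h1r
  have h2r' : ((y₂ : ℤ) : ZMod p) = i - 1 := by
    push_cast at h2r
    exact eq_sub_iff_add_eq.mpr h2r
  have hd : (p : ℤ) ∣ y₂ - y₁ := dvd_of_runner h2r' h1r'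
  have hyp : y₁ + p ≤ y₂ := by
    rcases dichotomy hp0 hd (le_of_lt hlt) with h | h <;> omega
  -- last bead on runner i
  have hLmem : lastBead p f i ∈ {x : ℤ | (x : ZMod p) = i ∧ x ∈ Occ f} := by
    unfold lastBead
    exact Int.csSup_mem (bead_nonempty hp0 hf i) (bead_bddAbove hf i)
  obtain ⟨hLr, hLo⟩ := hLmem
  have hLub : ∀ x : ℤ, (x : ZMod p) = i → x ∈ Occ f → x ≤ lastBead p f i :=
    fun x hx1 hx2 => le_csSup (bead_bddAbove hf i) ⟨hx1, hx2⟩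
  set L := lastBead p f i with hLdef
  -- first space on runner i - 1
  have hFmem : firstSpace p f (i - 1) ∈ {x : ℤ | (x : ZMod p) = i - 1 ∧ x ∉ Occ f} := by
    unfold firstSpace
    exact Int.csInf_mem (space_nonempty hp0 hf (i - 1)) (space_bddBelow hf (i - 1))
  obtain ⟨hFr, hFs⟩ := hFmem
  have hFlb : ∀ x : ℤ, (x : ZMod p) = i - 1 → x ∉ Occ f → firstSpace p f (i - 1) ≤ x :=
    fun x hx1 hx2 => csInf_le (space_bddBelow hf (i - 1)) ⟨hx1, hx2⟩
  set F := firstSpace p f (i - 1) with hFdef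
  -- QSep gives L ≤ F
  have hfs : firstSpace p f i < lastBead p f (i - 1) := by
    have ha : firstSpace p f i ≤ y₁ + 1 := csInf_le (space_bddBelow hf i) ⟨h1r, h1s⟩
    have hb : y₂ ≤ lastBead p f (i - 1) := le_csSup (bead_bddAbove hf (i - 1)) ⟨h2r', h2o⟩
    omega
  have hLF : L ≤ F := by
    by_contra hc
    exact hqs ⟨i, i - 1, hine, hfs, lt_of_not_ge hc⟩
  -- formula for qpos i
  have hLcast : ((L + p : ℤ) : ZMod p) = i := by
    push_cast
    simp [ZMod.natCast_self, hLr]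
  have hQi : qpos p f i = L + p - p * ((Sset p f i (L + p)).ncard : ℤ) := by
    rw [qpos_eq hp0 hf i hLcast]
    have hBempty : Bset p f i (L + p) = ∅ := by
      ext x
      simp only [Bset, Set.mem_setOf_eq, Set.mem_empty_iff_false, iff_false, not_and]
      intro hxo hxr hxge
      have := hLub x hxr hxo
      omega
    unfold gg
    rw [hBempty]
    simp
    ring
  -- formula for qpos (i-1)
  have hQi1 : qpos p f (i - 1) = F + p * ((Bset p f (i - 1) F).ncard : ℤ) := by
    rw [qpos_eq hp0 hf (i - 1) hFr]
    have hSempty : Sset p f (i - 1) F = ∅ := by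
      ext x
      simp only [Sset, Set.mem_setOf_eq, Set.mem_empty_iff_false, iff_false, not_and]
      intro hxs hxr hxlt
      have := hFlb x hxr hxs
      omega
    unfold gg
    rw [hSempty]
    simp
  have hnq := qpos_ne hp f i
  set s := (Sset p f i (L + p)).ncard with hsdef
  set b := (Bset p f (i - 1) F).ncard with hbdef
  have hbnn : (0 : ℤ) ≤ (b : ℤ) := Int.natCast_nonneg b
  have hsnn : (0 : ℤ) ≤ (s : ℤ) := Int.natCast_nonneg s
  have hpbnn : (0 : ℤ) ≤ (p : ℤ) * b := mul_nonneg (by linarith) hbnn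
  have hpsnn : (0 : ℤ) ≤ (p : ℤ) * s := mul_nonneg (by linarith) hsnn
  rcases Nat.eq_zero_or_pos s with hs0 | hs1
  · have hSem : Sset p f i (L + p) = ∅ := (Set.ncard_eq_zero (Sset_finite hf i _)).mp hs0
    have hy1 : L + p ≤ y₁ + 1 := by
      by_contra hc
      push_neg at hc
      have hmem : y₁ + 1 ∈ Sset p f i (L + p) := ⟨h1s, h1r, hc⟩
      rw [hSem] at hmem
      exact hmem
    rcases Nat.eq_zero_or_pos b with hb0 | hb1
    · have hBem : Bset p f (i - 1) F = ∅ := (Set.ncard_eq_zero (Bset_finite hf (i - 1) _)).mp hb0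
      have hy2 : y₂ < F := by
        by_contra hc
        push_neg at hc
        have hmem : y₂ ∈ Bset p f (i - 1) F := ⟨h2o, h2r', hc⟩
        rw [hBem] at hmem
        exact hmem
      rw [hQi, hQi1, hs0, hb0]
      push_cast
      omega
    · have hq : qpos p f i ≤ qpos p f (i - 1) := by
        rw [hQi, hQi1]
        have h1 : (1 : ℤ) ≤ (b : ℤ) := by exact_mod_cast hb1
        have h2 : (p : ℤ) ≤ (p : ℤ) * b := le_mul_of_one_le_right (by linarith) h1
        linarith
      exact lt_of_le_of_ne hq hnq
  · have hq : qpos p f i ≤ qpos p f (i - 1) := by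
      rw [hQi, hQi1]
      have h1 : (1 : ℤ) ≤ (s : ℤ) := by exact_mod_cast hs1
      have h2 : (p : ℤ) ≤ (p : ℤ) * s := le_mul_of_one_le_right (by linarith) h1
      linarith
    exact lt_of_le_of_ne hq hnq

lemma addable_space {f : ℕ → ℕ} (hf : IsPartition f) {r c : ℕ} (h : Addable f r c) :
    (f r : ℤ) - r ∉ Occ f := by
  rintro ⟨j, hj⟩
  rcases h.2 with hr0 | hlt
  · subst hr0
    have := hf.1 0 j (Nat.zero_le j)
    omega
  · have hr : r ≠ 0 := by
      rintro rfl
      have h0 : (0 : ℕ) - 1 = 0 := rfl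
      rw [h0] at hlt
      exact lt_irrefl _ hlt
    rcases le_or_gt r j with hle | hgt
    · have := hf.1 r j hle
      omega
    · have hj' : j ≤ r - 1 := by omega
      have h1 := hf.1 j (r - 1) hj'
      omega

end Stmt10Aux

/-- If `λ` is `p`-quotient-separated and has at least two addable `i`-nodes, then
`q_{i−1}(λ) > q_i(λ)`. -/
theorem stmt10 (p : ℕ) (hp : 2 ≤ p) (f : ℕ → ℕ) (hf : IsPartition f)
    (hqs : QSep p f) (i : ZMod p)
    (h2 : ∃ r₁ c₁ r₂ c₂ : ℕ, (r₁, c₁) ≠ (r₂, c₂) ∧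
      Addable f r₁ c₁ ∧ res p r₁ c₁ = i ∧ Addable f r₂ c₂ ∧ res p r₂ c₂ = i) :
    qpos p f i < qpos p f (i - 1) := by
  obtain ⟨r₁, c₁, r₂, c₂, hne, ha₁, hres₁, ha₂, hres₂⟩ := h2
  have hc₁ : c₁ = f r₁ := ha₁.1
  have hc₂ : c₂ = f r₂ := ha₂.1
  have hr12 : r₁ ≠ r₂ := by
    rintro rfl
    exact hne (by rw [hc₁, hc₂])
  have h1o : ((f r₁ : ℤ) - ((r₁ : ℤ) + 1)) ∈ Occ f := ⟨r₁, rfl⟩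
  have h2o : ((f r₂ : ℤ) - ((r₂ : ℤ) + 1)) ∈ Occ f := ⟨r₂, rfl⟩
  have h1s : ((f r₁ : ℤ) - ((r₁ : ℤ) + 1)) + 1 ∉ Occ f := by
    have e : ((f r₁ : ℤ) - ((r₁ : ℤ) + 1)) + 1 = (f r₁ : ℤ) - r₁ := by ring
    rw [e]
    exact Stmt10Aux.addable_space hf ha₁
  have h2s : ((f r₂ : ℤ) - ((r₂ : ℤ) + 1)) + 1 ∉ Occ f := by
    have e : ((f r₂ : ℤ) - ((r₂ : ℤ) + 1)) + 1 = (f r₂ : ℤ) - r₂ := by ring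
    rw [e]
    exact Stmt10Aux.addable_space hf ha₂
  have h1r : ((((f r₁ : ℤ) - ((r₁ : ℤ) + 1)) + 1 : ℤ) : ZMod p) = i := by
    rw [← hres₁]
    simp only [res, hc₁]
    push_cast
    ring
  have h2r : ((((f r₂ : ℤ) - ((r₂ : ℤ) + 1)) + 1 : ℤ) : ZMod p) = i := by
    rw [← hres₂]
    simp only [res, hc₂]
    push_cast
    ring
  rcases lt_trichotomy ((f r₁ : ℤ) - ((r₁ : ℤ) + 1)) ((f r₂ : ℤ) - ((r₂ : ℤ) + 1)) with h | h | h
  · exact Stmt10Aux.key hp hf hqs i h1o h1s h1r h2o h2s h2r h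
  · exfalso
    rcases Nat.lt_trichotomy r₁ r₂ with hr | hr | hr
    · have hm := hf.1 r₁ r₂ hr.le
      omega
    · exact hr12 hr
    · have hm := hf.1 r₂ r₁ hr.le
      omega
  · exact Stmt10Aux.key hp hf hqs i h2o h2s h2r h1o h1s h1r h
end

section
/- If λ is a p-quotient-separated partition and i ∈ ℤ/pℤ, then the partition λ^{△i} obtained from λ by adding all its addable i-nodes is also p-quotient-separated. -/
open Classical in
/-- `λ^{△i}`: the partition obtained from `λ` by adding all its addable `i`-nodes. -/
noncomputable def addAllF (p : ℕ) (i : ZMod p) (f : ℕ → ℕ) : ℕ → ℕ :=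
  fun r => f r + (if AddRes p f i r then 1 else 0)



lemma exists_le_res (p : ℕ) (hp0 : 0 < p) (j : ZMod p) (y : ℤ) :
    ∃ x : ℤ, x ≤ y ∧ (x : ZMod p) = j := by
  haveI : NeZero p := ⟨by omega⟩
  refine ⟨(j.val : ℤ) - p * (|y| + p), ?_, ?_⟩
  · have h1 : (j.val : ℤ) < p := by exact_mod_cast ZMod.val_lt j
    have h2 : (0:ℤ) ≤ |y| := abs_nonneg y
    have h3 : (|y| + (p:ℤ)) ≤ p * (|y| + p) := le_mul_of_one_le_left (by positivity) (by exact_mod_cast hp0)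
    have h4 : -|y| ≤ y := neg_abs_le y
    linarith
  · push_cast
    simp [ZMod.natCast_val, ZMod.cast_id]

lemma exists_ge_res (p : ℕ) (hp0 : 0 < p) (j : ZMod p) (y : ℤ) :
    ∃ x : ℤ, y ≤ x ∧ (x : ZMod p) = j := by
  haveI : NeZero p := ⟨by omega⟩
  refine ⟨(j.val : ℤ) + p * (|y| + p), ?_, ?_⟩
  · have h2 : (0:ℤ) ≤ |y| := abs_nonneg y
    have h3 : (|y| + (p:ℤ)) ≤ p * (|y| + p) := le_mul_of_one_le_left (by positivity) (by exact_mod_cast hp0)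
    have h4 : y ≤ |y| := le_abs_self y
    have h5 : (0:ℤ) ≤ j.val := by positivity
    linarith
  · push_cast
    simp [ZMod.natCast_val, ZMod.cast_id]
section T3
variable {p : ℕ}

lemma occ_le {g : ℕ → ℕ} (hg : IsPartition g) {x : ℤ} (hx : x ∈ Occ g) : x ≤ g 0 := by
  obtain ⟨j, rfl⟩ := hx
  have := hg.1 0 j (Nat.zero_le j)
  have : (g j : ℤ) ≤ g 0 := by exact_mod_cast this
  omega

lemma occ_lower {g : ℕ → ℕ} (hg : IsPartition g) : ∃ C : ℤ, ∀ x : ℤ, x ≤ C → x ∈ Occ g := by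
  obtain ⟨N, hN⟩ := hg.2
  refine ⟨-(N+1), fun x hx => ⟨(-x-1).toNat, ?_⟩⟩
  have h1 : ((-x-1).toNat : ℤ) = -x-1 := Int.toNat_of_nonneg (by omega)
  have h2 : N ≤ (-x-1).toNat := by omega
  rw [hN _ h2]
  omega

lemma lastBead_spec (hp0 : 0 < p) {g : ℕ → ℕ} (hg : IsPartition g) (j : ZMod p) :
    lastBead p g j ∈ Occ g ∧ ((lastBead p g j : ℤ) : ZMod p) = j ∧
      ∀ x : ℤ, (x : ZMod p) = j → x ∈ Occ g → x ≤ lastBead p g j := by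
  set S : Set ℤ := {x : ℤ | (x : ZMod p) = j ∧ x ∈ Occ g} with hS
  obtain ⟨C, hC⟩ := occ_lower hg
  obtain ⟨x0, hx0, hx0r⟩ := exists_le_res p hp0 j C
  have hne : S.Nonempty := ⟨x0, hx0r, hC _ hx0⟩
  have hbd : BddAbove S := ⟨g 0, fun x hx => occ_le hg hx.2⟩
  have hmem : sSup S ∈ S := Int.csSup_mem hne hbd
  exact ⟨hmem.2, hmem.1, fun x hr ho => le_csSup hbd ⟨hr, ho⟩⟩

lemma firstSpace_spec (hp0 : 0 < p) {g : ℕ → ℕ} (hg : IsPartition g) (j : ZMod p) :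
    firstSpace p g j ∉ Occ g ∧ ((firstSpace p g j : ℤ) : ZMod p) = j ∧
      ∀ x : ℤ, (x : ZMod p) = j → x ∉ Occ g → firstSpace p g j ≤ x := by
  set S : Set ℤ := {x : ℤ | (x : ZMod p) = j ∧ x ∉ Occ g} with hS
  obtain ⟨C, hC⟩ := occ_lower hg
  obtain ⟨x0, hx0, hx0r⟩ := exists_ge_res p hp0 j (g 0 + 1)
  have hne : S.Nonempty := ⟨x0, hx0r, fun hmem => by have := occ_le hg hmem; omega⟩
  have hbd : BddBelow S := ⟨C + 1, fun x hx => by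
    by_contra hlt
    exact hx.2 (hC x (by omega))⟩
  have hmem : sInf S ∈ S := Int.csInf_mem hne hbd
  exact ⟨hmem.2, hmem.1, fun x hr ho => csInf_le hbd ⟨hr, ho⟩⟩

end T3
section T4
variable {p : ℕ} {f : ℕ → ℕ} {i : ZMod p}

/-- position of the bead of row j -/
def bpos (f : ℕ → ℕ) (j : ℕ) : ℤ := (f j : ℤ) - ((j : ℤ) + 1)

lemma mem_occ_iff {x : ℤ} : x ∈ Occ f ↔ ∃ j : ℕ, x = bpos f j := Iff.rfl

lemma bpos_lt (hf : IsPartition f) {j k : ℕ} (h : j < k) : bpos f k < bpos f j := by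
  have h1 := hf.1 j k h.le
  have h2 : (f k : ℤ) ≤ f j := by exact_mod_cast h1
  unfold bpos; omega

lemma succ_mem_iff (hf : IsPartition f) (j : ℕ) :
    bpos f j + 1 ∈ Occ f ↔ ∃ j' : ℕ, j = j' + 1 ∧ f j' = f j := by
  constructor
  · rintro ⟨k, hk⟩
    have hk' : bpos f k = bpos f j + 1 := hk.symm
    have hkj : k < j := by
      by_contra hge
      push_neg at hge
      rcases eq_or_lt_of_le hge with h | h
      · rw [h] at hk'; omega
      · have := bpos_lt hf h; omega
    obtain ⟨j', rfl⟩ : ∃ j', j = j' + 1 := ⟨j - 1, by omega⟩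
    refine ⟨j', rfl, ?_⟩
    have h1 : bpos f j' ≤ bpos f k := by
      rcases eq_or_lt_of_le (Nat.lt_succ_iff.mp hkj) with h | h
      · rw [h]
      · exact (bpos_lt hf h).le
    have h2 := bpos_lt hf (show j' < j' + 1 by omega)
    have h3 : bpos f j' = bpos f (j' + 1) + 1 := by omega
    unfold bpos at h3
    push_cast at h3
    omega
  · rintro ⟨j', rfl, hj'⟩
    refine ⟨j', ?_⟩
    unfold bpos
    push_cast
    omega

lemma addres_iff (hf : IsPartition f) (j : ℕ) :
    AddRes p f i j ↔ ((bpos f j + 1 : ℤ) : ZMod p) = i ∧ bpos f j + 1 ∉ Occ f := by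
  have hres : ((bpos f j + 1 : ℤ) : ZMod p) = (f j : ZMod p) - (j : ZMod p) := by
    unfold bpos; push_cast; ring
  constructor
  · rintro ⟨c, ⟨rfl, hcond⟩, hr⟩
    refine ⟨?_, ?_⟩
    · rw [hres]; exact hr
    · rw [succ_mem_iff hf]
      rintro ⟨j', rfl, hj'⟩
      rcases hcond with h | h
      · omega
      · simp at h; omega
  · rintro ⟨hr, hnm⟩
    refine ⟨f j, ⟨rfl, ?_⟩, ?_⟩
    · rcases Nat.eq_zero_or_pos j with h | h
      · exact Or.inl h
      · right
        obtain ⟨j', rfl⟩ : ∃ j', j = j' + 1 := ⟨j - 1, by omega⟩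
        rw [succ_mem_iff hf] at hnm
        push_neg at hnm
        have h1 := hnm j' rfl
        have h2 := hf.1 j' (j' + 1) (Nat.le_succ j')
        simp
        omega
    · show (f j : ZMod p) - (j : ZMod p) = i
      rw [← hres]; exact hr

lemma occ_addAll_iff (hf : IsPartition f) (x : ℤ) :
    x ∈ Occ (addAllF p i f) ↔
      ((x ∈ Occ f ∧ ¬(((x + 1 : ℤ) : ZMod p) = i ∧ x + 1 ∉ Occ f)) ∨
       (x ∉ Occ f ∧ (x : ZMod p) = i ∧ x - 1 ∈ Occ f)) := by
  constructor
  · rintro ⟨j, hj⟩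
    by_cases hA : AddRes p f i j
    · right
      have hx : x = bpos f j + 1 := by
        simp only [addAllF, if_pos hA] at hj
        unfold bpos; push_cast at hj ⊢; omega
      rw [addres_iff hf] at hA
      subst hx
      exact ⟨hA.2, hA.1, by simpa using ⟨j, rfl⟩⟩
    · left
      have hx : x = bpos f j := by
        simp only [addAllF, if_neg hA] at hj
        unfold bpos; push_cast at hj ⊢; omega
      subst hx
      rw [addres_iff hf] at hA
      exact ⟨⟨j, rfl⟩, hA⟩
  · rintro (⟨⟨j, rfl⟩, hmov⟩ | ⟨hnm, hr, ⟨j, hj⟩⟩)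
    · have hA : ¬ AddRes p f i j := by rw [addres_iff hf]; exact hmov
      refine ⟨j, ?_⟩
      have he : addAllF p i f j = f j := by simp [addAllF, hA]
      rw [he]
    · have hx : bpos f j + 1 = x := by unfold bpos; omega
      have hA : AddRes p f i j := by
        rw [addres_iff hf, hx]
        exact ⟨hr, hnm⟩
      refine ⟨j, ?_⟩
      have he : addAllF p i f j = f j + 1 := by simp [addAllF, hA]
      rw [he]
      push_cast
      omega

end T4
section T5
variable {p : ℕ} {f : ℕ → ℕ} {i : ZMod p}

lemma cast_add_one (x : ℤ) : ((x + 1 : ℤ) : ZMod p) = (x : ZMod p) + 1 := by push_cast; ring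

lemma cast_sub_one (x : ℤ) : ((x - 1 : ℤ) : ZMod p) = (x : ZMod p) - 1 := by push_cast; ring

lemma occ_addAll_other (hf : IsPartition f) {x : ℤ}
    (h1 : (x : ZMod p) ≠ i) (h2 : (x : ZMod p) ≠ i - 1) :
    x ∈ Occ (addAllF p i f) ↔ x ∈ Occ f := by
  rw [occ_addAll_iff hf]
  constructor
  · rintro (⟨h, _⟩ | ⟨_, hr, _⟩)
    · exact h
    · exact absurd hr h1
  · intro hx
    left
    refine ⟨hx, ?_⟩
    rintro ⟨hr, _⟩
    apply h2
    rw [cast_add_one] at hr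
    linear_combination hr

lemma zmodOneNeZero (hp : 2 ≤ p) : (1 : ZMod p) ≠ 0 := by
  haveI : Fact (1 < p) := ⟨hp⟩
  exact one_ne_zero

lemma occ_addAll_i (hp : 2 ≤ p) (hf : IsPartition f) {x : ℤ} (h : (x : ZMod p) = i) :
    x ∈ Occ (addAllF p i f) ↔ (x ∈ Occ f ∨ x - 1 ∈ Occ f) := by
  have hkey : ¬ (((x + 1 : ℤ) : ZMod p) = i) := by
    rw [cast_add_one, h]
    intro hc
    exact zmodOneNeZero hp (by linear_combination hc)
  rw [occ_addAll_iff hf]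
  constructor
  · rintro (⟨h1, _⟩ | ⟨_, _, h1⟩)
    · exact Or.inl h1
    · exact Or.inr h1
  · rintro (h1 | h1)
    · exact Or.inl ⟨h1, fun hc => hkey hc.1⟩
    · by_cases hx : x ∈ Occ f
      · exact Or.inl ⟨hx, fun hc => hkey hc.1⟩
      · exact Or.inr ⟨hx, h, h1⟩

lemma occ_addAll_pred (hp : 2 ≤ p) (hf : IsPartition f) {x : ℤ} (h : (x : ZMod p) = i - 1) :
    x ∈ Occ (addAllF p i f) ↔ (x ∈ Occ f ∧ x + 1 ∈ Occ f) := by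
  have hxi : (x : ZMod p) ≠ i := by
    rw [h]
    intro hc
    exact zmodOneNeZero hp (by linear_combination -hc)
  have hr1 : ((x + 1 : ℤ) : ZMod p) = i := by rw [cast_add_one, h]; ring
  rw [occ_addAll_iff hf]
  constructor
  · rintro (⟨h1, h2⟩ | ⟨_, hr, _⟩)
    · refine ⟨h1, ?_⟩
      by_contra hn
      exact h2 ⟨hr1, hn⟩
    · exact absurd hr hxi
  · rintro ⟨h1, h2⟩
    exact Or.inl ⟨h1, fun hc => hc.2 h2⟩

lemma addAll_isPartition (hf : IsPartition f) : IsPartition (addAllF p i f) := by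
  constructor
  · have step : ∀ r : ℕ, addAllF p i f (r + 1) ≤ addAllF p i f r := by
      intro r
      have hmono := hf.1 r (r + 1) (Nat.le_succ r)
      by_cases hA : AddRes p f i (r + 1)
      · have hs : f (r + 1) < f r := by
          obtain ⟨c, ⟨hc, hcond⟩, _⟩ := hA
          rcases hcond with h | h
          · omega
          · simpa using h
        simp only [addAllF, if_pos hA]
        split_ifs <;> omega
      · simp only [addAllF, if_neg hA]
        split_ifs <;> omega
    intro m n hmn
    induction hmn with
    | refl => exact le_refl _
    | step h ih => exact le_trans (step _) ih
  · obtain ⟨N, hN⟩ := hf.2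
    refine ⟨N + 1, fun n hn => ?_⟩
    have h1 : f n = 0 := hN n (by omega)
    have h2 : ¬ AddRes p f i n := by
      rintro ⟨c, ⟨hc, hcond⟩, _⟩
      rcases hcond with h | h
      · omega
      · have : f (n - 1) = 0 := hN (n - 1) (by omega)
        omega
    simp [addAllF, h2, h1]

end T5
/-- If `λ` is `p`-quotient-separated then so is the partition `λ^{△i}` obtained by
adding all the addable `i`-nodes of `λ`. -/
theorem stmt11 (p : ℕ) (hp : 2 ≤ p) (f : ℕ → ℕ) (hf : IsPartition f) (i : ZMod p)
    (hqs : QSep p f) : QSep p (addAllF p i f) := by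
  have hp0 : 0 < p := by omega
  have hne : i - 1 ≠ i := fun h => zmodOneNeZero hp (by linear_combination -h)
  have hgp : IsPartition (addAllF p i f) := addAll_isPartition hf
  rintro ⟨a, b, hab, h1, h2⟩
  have FS := fun j : ZMod p => firstSpace_spec hp0 hf j
  have LB := fun j : ZMod p => lastBead_spec hp0 hf j
  have FS' := fun j : ZMod p => firstSpace_spec hp0 hgp j
  have LB' := fun j : ZMod p => lastBead_spec hp0 hgp j
  have cross : ∀ u v : ZMod p, u ≠ v →
      firstSpace p f u < lastBead p f v → firstSpace p f v < lastBead p f u → False :=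
    fun u v h hx hy => hqs ⟨u, v, h, hx, hy⟩
  -- on a runner different from i and i-1 nothing changes
  have other : ∀ c : ZMod p, c ≠ i → c ≠ i - 1 →
      firstSpace p (addAllF p i f) c = firstSpace p f c ∧
      lastBead p (addAllF p i f) c = lastBead p f c := by
    intro c hc1 hc2
    have key : ∀ x : ℤ, (x : ZMod p) = c → (x ∈ Occ (addAllF p i f) ↔ x ∈ Occ f) :=
      fun x hr => occ_addAll_other hf (by rw [hr]; exact hc1) (by rw [hr]; exact hc2)
    constructor
    · unfold firstSpace
      congr 1
      ext x
      simp only [Set.mem_setOf_eq]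
      by_cases hr : (x : ZMod p) = c
      · simp [hr, key x hr]
      · simp [hr]
    · unfold lastBead
      congr 1
      ext x
      simp only [Set.mem_setOf_eq]
      by_cases hr : (x : ZMod p) = c
      · simp [hr, key x hr]
      · simp [hr]
  -- facts about runner i
  have hsp : firstSpace p (addAllF p i f) i ∉ Occ f ∧
      firstSpace p (addAllF p i f) i - 1 ∉ Occ f := by
    have h := (FS' i).1
    rw [occ_addAll_i hp hf (FS' i).2.1] at h
    push_neg at h
    exact h
  have hFi : firstSpace p f i ≤ firstSpace p (addAllF p i f) i :=
    (FS i).2.2 _ (FS' i).2.1 hsp.1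
  have hFi1 : firstSpace p f (i-1) + 1 ≤ firstSpace p (addAllF p i f) i := by
    have hres2 : ((firstSpace p (addAllF p i f) i - 1 : ℤ) : ZMod p) = i - 1 := by
      rw [cast_sub_one, (FS' i).2.1]
    have := (FS (i-1)).2.2 _ hres2 hsp.2
    omega
  have hLub : lastBead p (addAllF p i f) i ∈ Occ f ∨
      lastBead p (addAllF p i f) i - 1 ∈ Occ f := by
    have h := (LB' i).1
    rwa [occ_addAll_i hp hf (LB' i).2.1] at h
  -- facts about runner i-1
  have hLp : lastBead p (addAllF p i f) (i-1) ≤ lastBead p f (i-1) ∧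
      lastBead p (addAllF p i f) (i-1) + 1 ≤ lastBead p f i := by
    have hm := (LB' (i-1)).1
    rw [occ_addAll_pred hp hf (LB' (i-1)).2.1] at hm
    refine ⟨(LB (i-1)).2.2 _ (LB' (i-1)).2.1 hm.1, ?_⟩
    exact (LB i).2.2 _ (by rw [cast_add_one, (LB' (i-1)).2.1]; ring) hm.2
  have hFp : firstSpace p (addAllF p i f) (i-1) ∉ Occ f ∨
      firstSpace p (addAllF p i f) (i-1) + 1 ∉ Occ f := by
    have h := (FS' (i-1)).1
    rw [occ_addAll_pred hp hf (FS' (i-1)).2.1] at h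
    tauto
  -- the three kinds of crossings
  have main6 : firstSpace p (addAllF p i f) i < lastBead p (addAllF p i f) (i-1) → False := by
    intro hA
    refine cross i (i-1) (Ne.symm hne) (by linarith [hLp.1]) (by linarith [hLp.2])
  have main2 : ∀ c : ZMod p, c ≠ i → c ≠ i - 1 →
      firstSpace p (addAllF p i f) i < lastBead p (addAllF p i f) c →
      firstSpace p (addAllF p i f) c < lastBead p (addAllF p i f) i → False := by
    intro c hc1 hc2 hA hB
    obtain ⟨hFc, hLc⟩ := other c hc1 hc2
    rw [hLc] at hA
    rw [hFc] at hB
    rcases hLub with h | h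
    · have hLi : lastBead p (addAllF p i f) i ≤ lastBead p f i :=
        (LB i).2.2 _ (LB' i).2.1 h
      exact cross i c (Ne.symm hc1) (by linarith) (by linarith)
    · have hLi1 : lastBead p (addAllF p i f) i - 1 ≤ lastBead p f (i-1) :=
        (LB (i-1)).2.2 _ (by rw [cast_sub_one, (LB' i).2.1]) h
      have hne2 : firstSpace p f c ≠ lastBead p f (i-1) :=
        fun he => (FS c).1 (he ▸ (LB (i-1)).1)
      exact cross (i-1) c (Ne.symm hc2) (by linarith) (by omega)
  have main3 : ∀ c : ZMod p, c ≠ i → c ≠ i - 1 →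
      firstSpace p (addAllF p i f) (i-1) < lastBead p (addAllF p i f) c →
      firstSpace p (addAllF p i f) c < lastBead p (addAllF p i f) (i-1) → False := by
    intro c hc1 hc2 hA hB
    obtain ⟨hFc, hLc⟩ := other c hc1 hc2
    rw [hLc] at hA
    rw [hFc] at hB
    have hcp1 : firstSpace p f c < lastBead p f (i-1) := by linarith [hLp.1]
    have hcp2 : firstSpace p f c < lastBead p f i := by linarith [hLp.2]
    rcases hFp with h | h
    · have : firstSpace p f (i-1) ≤ firstSpace p (addAllF p i f) (i-1) :=
        (FS (i-1)).2.2 _ (FS' (i-1)).2.1 h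
      exact cross (i-1) c (Ne.symm hc2) (by linarith) hcp1
    · have hFiLe : firstSpace p f i ≤ firstSpace p (addAllF p i f) (i-1) + 1 :=
        (FS i).2.2 _ (by rw [cast_add_one, (FS' (i-1)).2.1]; ring) h
      have hne2 : firstSpace p f i ≠ lastBead p f c :=
        fun he => (FS i).1 (he ▸ (LB c).1)
      exact cross i c (Ne.symm hc1) (by omega) hcp2
  -- dispatch
  by_cases hai : a = i
  · rw [hai] at h1 h2 hab
    by_cases hbp : b = i - 1
    · rw [hbp] at h1; exact main6 h1
    · exact main2 b (Ne.symm hab) hbp h1 h2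
  · by_cases hap : a = i - 1
    · rw [hap] at h1 h2 hab
      by_cases hbi : b = i
      · rw [hbi] at h2; exact main6 h2
      · exact main3 b hbi (fun h => hab h.symm) h1 h2
    · by_cases hbi : b = i
      · rw [hbi] at h1 h2; exact main2 a hai hap h2 h1
      · by_cases hbp : b = i - 1
        · rw [hbp] at h1 h2; exact main3 a hai hap h2 h1
        · obtain ⟨hFa, hLa⟩ := other a hai hap
          obtain ⟨hFb, hLb⟩ := other b hbi hbp
          exact cross a b hab (by rw [← hFa, ← hLb]; exact h1) (by rw [← hFb, ← hLa]; exact h2)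
end
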